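/- arXiv:2308.00900 — 4 statements merged into one kernel-verified Lean document; each statement's English description precedes it below -/
import Mathlib

section
/- Metric balls in the space of continuous maps of a compact space under the graph Fréchet distance are path-connected: let X be a compact topological space, δ > 0, and let φ₀, φ₁, φ₂ : X → ℝⁿ be continuous maps with d_FG(φ₀,φ₁) < δ and d_FG(φ₀,φ₂) < δ. Then there exists a family Γ : [0,1] → (X → ℝⁿ) such that each Γ_t is continuous, Γ_0 = φ₁, Γ_1 = φ₂, t ↦ Γ_t is continuous with respect to d_FG, and d_FG(φ₀, Γ_t) < δ for all t ∈ [0,1]. -/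
open unitInterval

/-- The path Fréchet distance: infimum over orientation-preserving
homeomorphisms of `[0,1]` (i.e. those fixing `0`) of the sup of distances. -/
noncomputable def dFP {E : Type*} [PseudoEMetricSpace E]
    (α β : unitInterval → E) : ENNReal :=
  ⨅ r : {r : unitInterval ≃ₜ unitInterval // r 0 = 0},
    ⨆ t : unitInterval, edist (α t) (β (r.1 t))

/-- The graph Fréchet distance: infimum over all homeomorphisms `h : X ≃ₜ Y`
of the sup of distances; it is `∞` if `X` and `Y` are not homeomorphic. -/
noncomputable def dFG {X Y E : Type*} [TopologicalSpace X] [TopologicalSpace Y]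
    [PseudoEMetricSpace E] (φ : X → E) (ψ : Y → E) : ENNReal :=
  ⨅ h : X ≃ₜ Y, ⨆ x : X, edist (φ x) (ψ (h x))

/-- A path is rectifiable if it has bounded variation (finite length). -/
def Rectifiable {E : Type*} [PseudoEMetricSpace E] (γ : unitInterval → E) : Prop :=
  BoundedVariationOn γ Set.univ

/-- A map is locally injective (an immersion) if every point of the domain has
a neighborhood on which the map is injective. -/
def LocallyInjective {X Y : Type*} [TopologicalSpace X] (f : X → Y) : Prop :=
  ∀ x : X, ∃ U ∈ nhds x, Set.InjOn f U

/-- A map of the circle is rectifiable if `t ↦ φ(e^{2πit})` has bounded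
variation on `[0,1]`. -/
def CircleRectifiable {E : Type*} [PseudoEMetricSpace E] (φ : Circle → E) : Prop :=
  BoundedVariationOn (fun t : ℝ => φ (Circle.exp (2 * Real.pi * t))) (Set.Icc (0:ℝ) 1)

lemma dFG_le_iSup {X E : Type*} [TopologicalSpace X] [PseudoEMetricSpace E]
    (φ ψ : X → E) : dFG φ ψ ≤ ⨆ x, edist (φ x) (ψ x) :=
  iInf_le_of_le (Homeomorph.refl X) (le_of_eq rfl)

lemma dFG_triangle {X Y Z E : Type*} [TopologicalSpace X] [TopologicalSpace Y]
    [TopologicalSpace Z] [PseudoEMetricSpace E]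
    (α : X → E) (β : Y → E) (γ : Z → E) : dFG α γ ≤ dFG α β + dFG β γ := by
  have hrw : dFG α β + dFG β γ = ⨅ h : X ≃ₜ Y, ⨅ g : Y ≃ₜ Z,
      ((⨆ x, edist (α x) (β (h x))) + ⨆ y, edist (β y) (γ (g y))) := by
    rw [dFG, dFG, ENNReal.iInf_add]
    exact iInf_congr fun h => ENNReal.add_iInf
  rw [hrw]
  refine le_iInf fun h => le_iInf fun g => ?_
  calc dFG α γ ≤ ⨆ x, edist (α x) (γ ((h.trans g) x)) := iInf_le _ _
    _ ≤ (⨆ x, edist (α x) (β (h x))) + ⨆ y, edist (β y) (γ (g y)) := by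
        refine iSup_le fun x => (edist_triangle _ (β (h x)) _).trans ?_
        exact add_le_add (le_iSup (fun x => edist (α x) (β (h x))) x)
          (le_iSup (fun y => edist (β y) (γ (g y))) (h x))

lemma dFG_comp_self {X E : Type*} [TopologicalSpace X] [PseudoEMetricSpace E]
    (f : X → E) (h : X ≃ₜ X) :
    dFG (fun x => f (h x)) f = 0 ∧ dFG f (fun x => f (h x)) = 0 := by
  constructor
  · refine le_antisymm (le_trans (iInf_le _ h) ?_) zero_le
    simp
  · refine le_antisymm (le_trans (iInf_le _ h.symm) ?_) zero_le
    simp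

lemma dFG_self_le_zero {X E : Type*} [TopologicalSpace X] [PseudoEMetricSpace E]
    (f : X → E) : dFG f f = 0 := by
  refine le_antisymm (le_trans (dFG_le_iSup f f) ?_) zero_le
  simp

/-- Metric balls in the space of continuous maps of a compact space under the
graph Fréchet distance are path-connected. -/
theorem dFG_balls_path_connected {n : ℕ} {X : Type*}
    [TopologicalSpace X] [CompactSpace X]
    (δ : ℝ) (hδ : 0 < δ)
    (φ₀ φ₁ φ₂ : X → EuclideanSpace ℝ (Fin n))
    (h₀ : Continuous φ₀) (h₁ : Continuous φ₁) (h₂ : Continuous φ₂)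
    (hd₁ : dFG φ₀ φ₁ < ENNReal.ofReal δ) (hd₂ : dFG φ₀ φ₂ < ENNReal.ofReal δ) :
    ∃ Γ : unitInterval → X → EuclideanSpace ℝ (Fin n),
      (∀ t, Continuous (Γ t)) ∧
      Γ 0 = φ₁ ∧ Γ 1 = φ₂ ∧
      (∀ t : unitInterval, ∀ ε : ℝ, 0 < ε → ∃ δ' : ℝ, 0 < δ' ∧
        ∀ s : unitInterval, |(s : ℝ) - (t : ℝ)| < δ' →
          dFG (Γ s) (Γ t) < ENNReal.ofReal ε) ∧
      (∀ t : unitInterval, dFG φ₀ (Γ t) < ENNReal.ofReal δ) := by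
  classical
  -- extract near-optimal homeomorphisms
  obtain ⟨g₁, hg₁⟩ : ∃ g : X ≃ₜ X, (⨆ x, edist (φ₀ x) (φ₁ (g x))) < ENNReal.ofReal δ :=
    iInf_lt_iff.1 hd₁
  obtain ⟨g₂, hg₂⟩ : ∃ g : X ≃ₜ X, (⨆ x, edist (φ₀ x) (φ₂ (g x))) < ENNReal.ofReal δ :=
    iInf_lt_iff.1 hd₂
  set ψ₁ : X → EuclideanSpace ℝ (Fin n) := fun x => φ₁ (g₁ x) with hψ₁def
  set ψ₂ : X → EuclideanSpace ℝ (Fin n) := fun x => φ₂ (g₂ x) with hψ₂def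
  have hcψ₁ : Continuous ψ₁ := h₁.comp g₁.continuous
  have hcψ₂ : Continuous ψ₂ := h₂.comp g₂.continuous
  -- a bound on ‖ψ₁ - ψ₂‖
  obtain ⟨M, hM⟩ : ∃ M, ∀ x, ‖ψ₁ x - ψ₂ x‖ ≤ M := by
    obtain ⟨M, hM⟩ := (isCompact_range ((hcψ₁.sub hcψ₂).norm)).bddAbove
    exact ⟨M, fun x => hM ⟨x, rfl⟩⟩
  set C : ℝ := max M 0 with hCdef
  have hC0 : 0 ≤ C := le_max_right _ _
  have hMC : ∀ x, ‖ψ₁ x - ψ₂ x‖ ≤ C := fun x => (hM x).trans (le_max_left _ _)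
  -- the straight-line homotopy
  set L : unitInterval → X → EuclideanSpace ℝ (Fin n) :=
    fun t x => (1 - (t : ℝ)) • ψ₁ x + (t : ℝ) • ψ₂ x with hLdef
  have h10 : (1 : unitInterval) ≠ 0 := fun h => by
    have := congrArg (Subtype.val) h
    norm_num at this
  set Γ : unitInterval → X → EuclideanSpace ℝ (Fin n) :=
    fun t => if t = 0 then φ₁ else if t = 1 then φ₂ else L t with hΓdef
  have hΓ0 : Γ 0 = φ₁ := by simp [hΓdef]
  have hΓ1 : Γ 1 = φ₂ := by simp [hΓdef, h10]
  have hL0 : L 0 = ψ₁ := by funext x; simp [hLdef]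
  have hL1 : L 1 = ψ₂ := by funext x; simp [hLdef]
  -- Γ t and L t are at graph Fréchet distance 0
  have hΓL : ∀ u, dFG (Γ u) (L u) = 0 ∧ dFG (L u) (Γ u) = 0 := by
    intro u
    by_cases hu0 : u = 0
    · subst hu0
      rw [hΓ0, hL0, hψ₁def]
      exact ⟨(dFG_comp_self φ₁ g₁).2, (dFG_comp_self φ₁ g₁).1⟩
    by_cases hu1 : u = 1
    · subst hu1
      rw [hΓ1, hL1, hψ₂def]
      exact ⟨(dFG_comp_self φ₂ g₂).2, (dFG_comp_self φ₂ g₂).1⟩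
    have : Γ u = L u := by simp [hΓdef, hu0, hu1]
    rw [this]
    exact ⟨dFG_self_le_zero _, dFG_self_le_zero _⟩
  -- Lipschitz bound on L
  have hLip : ∀ s t : unitInterval,
      dFG (L s) (L t) ≤ ENNReal.ofReal (|(s : ℝ) - t| * C) := by
    intro s t
    refine (dFG_le_iSup _ _).trans (iSup_le fun x => ?_)
    rw [edist_dist]
    refine ENNReal.ofReal_le_ofReal ?_
    have hsub : L s x - L t x = ((s : ℝ) - t) • (ψ₂ x - ψ₁ x) := by
      simp only [hLdef]
      module
    rw [dist_eq_norm, hsub, norm_smul, Real.norm_eq_abs, norm_sub_rev]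
    exact mul_le_mul_of_nonneg_left (hMC x) (abs_nonneg _)
  have hΓLip : ∀ s t : unitInterval,
      dFG (Γ s) (Γ t) ≤ ENNReal.ofReal (|(s : ℝ) - t| * C) := by
    intro s t
    calc dFG (Γ s) (Γ t) ≤ dFG (Γ s) (L s) + dFG (L s) (Γ t) := dFG_triangle _ _ _
      _ ≤ 0 + (dFG (L s) (L t) + dFG (L t) (Γ t)) :=
        add_le_add (le_of_eq (hΓL s).1) (dFG_triangle _ _ _)
      _ = dFG (L s) (L t) := by rw [(hΓL t).2, zero_add, add_zero]
      _ ≤ _ := hLip s t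
  refine ⟨Γ, ?_, hΓ0, hΓ1, ?_, ?_⟩
  · -- continuity of each Γ t
    intro t
    by_cases ht0 : t = 0
    · rw [ht0, hΓ0]; exact h₁
    by_cases ht1 : t = 1
    · rw [ht1, hΓ1]; exact h₂
    have : Γ t = L t := by simp [hΓdef, ht0, ht1]
    rw [this]
    exact ((continuous_const : Continuous fun _ : X => (1 - (t : ℝ))).smul hcψ₁).add
      ((continuous_const : Continuous fun _ : X => (t : ℝ)).smul hcψ₂)
  · -- continuity in t w.r.t. dFG
    intro t ε hε
    refine ⟨ε / (C + 1), div_pos hε (by linarith), fun s hs => ?_⟩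
    refine lt_of_le_of_lt (hΓLip s t) ?_
    rw [ENNReal.ofReal_lt_ofReal_iff hε]
    calc |(s : ℝ) - t| * C ≤ |(s : ℝ) - t| * (C + 1) :=
          mul_le_mul_of_nonneg_left (by linarith) (abs_nonneg _)
      _ < (ε / (C + 1)) * (C + 1) := by
          exact mul_lt_mul_of_pos_right hs (by linarith)
      _ = ε := div_mul_cancel₀ ε (by linarith)
  · -- all of Γ stays in the ball
    intro t
    have hball : dFG φ₀ (L t) < ENNReal.ofReal δ := by
      refine lt_of_le_of_lt ((dFG_le_iSup _ _).trans (iSup_le fun x => ?_))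
        (max_lt hg₁ hg₂)
      have hd : dist (φ₀ x) (L t x) ≤
          max (dist (φ₀ x) (ψ₁ x)) (dist (φ₀ x) (ψ₂ x)) := by
        have hsub : φ₀ x - L t x =
            (1 - (t : ℝ)) • (φ₀ x - ψ₁ x) + (t : ℝ) • (φ₀ x - ψ₂ x) := by
          simp only [hLdef]
          module
        have ht0 : (0:ℝ) ≤ t := t.2.1
        have ht1 : (t:ℝ) ≤ 1 := t.2.2
        calc dist (φ₀ x) (L t x) = ‖φ₀ x - L t x‖ := dist_eq_norm _ _
          _ ≤ ‖(1 - (t : ℝ)) • (φ₀ x - ψ₁ x)‖ + ‖(t : ℝ) • (φ₀ x - ψ₂ x)‖ := by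
              rw [hsub]; exact norm_add_le _ _
          _ = (1 - (t : ℝ)) * ‖φ₀ x - ψ₁ x‖ + (t : ℝ) * ‖φ₀ x - ψ₂ x‖ := by
              rw [norm_smul, norm_smul, Real.norm_eq_abs, Real.norm_eq_abs,
                abs_of_nonneg (by linarith), abs_of_nonneg ht0]
          _ ≤ (1 - (t : ℝ)) * max ‖φ₀ x - ψ₁ x‖ ‖φ₀ x - ψ₂ x‖ +
              (t : ℝ) * max ‖φ₀ x - ψ₁ x‖ ‖φ₀ x - ψ₂ x‖ :=
              add_le_add
                (mul_le_mul_of_nonneg_left (le_max_left _ _) (by linarith))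
                (mul_le_mul_of_nonneg_left (le_max_right _ _) ht0)
          _ = max (dist (φ₀ x) (ψ₁ x)) (dist (φ₀ x) (ψ₂ x)) := by
              rw [dist_eq_norm, dist_eq_norm]; ring
      have key : edist (φ₀ x) (L t x) ≤
          max (edist (φ₀ x) (ψ₁ x)) (edist (φ₀ x) (ψ₂ x)) := by
        rcases le_total (dist (φ₀ x) (ψ₁ x)) (dist (φ₀ x) (ψ₂ x)) with hc | hc
        · refine le_max_of_le_right ?_
          rw [edist_dist, edist_dist]
          exact ENNReal.ofReal_le_ofReal (hd.trans_eq (max_eq_right hc))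
        · refine le_max_of_le_left ?_
          rw [edist_dist, edist_dist]
          exact ENNReal.ofReal_le_ofReal (hd.trans_eq (max_eq_left hc))
      refine key.trans (max_le_max ?_ ?_)
      · exact le_iSup (fun x => edist (φ₀ x) (ψ₁ x)) x
      · exact le_iSup (fun x => edist (φ₀ x) (ψ₂ x)) x
    calc dFG φ₀ (Γ t) ≤ dFG φ₀ (L t) + dFG (L t) (Γ t) := dFG_triangle _ _ _
      _ = dFG φ₀ (L t) := by rw [(hΓL t).2, add_zero]
      _ < ENNReal.ofReal δ := hball
end

section
/- Metric balls in the space of continuous rectifiable paths under the path Fréchet distance are path-connected: let δ > 0 and let α, β₁, β₂ : [0,1] → ℝⁿ be continuous rectifiable paths with d_FP(α,β₁) < δ and d_FP(α,β₂) < δ. Then there exists a family Γ : [0,1] → ([0,1] → ℝⁿ) such that each Γ_t is continuous and rectifiable, Γ_0 = β₁, Γ_1 = β₂, t ↦ Γ_t is continuous with respect to d_FP, and d_FP(α, Γ_t) < δ for all t ∈ [0,1]. -/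
open unitInterval

section Aux
open Set


lemma eVariationOn_add_le {α E : Type*} [LinearOrder α] [SeminormedAddCommGroup E]
    (f g : α → E) (s : Set α) :
    eVariationOn (fun x => f x + g x) s ≤ eVariationOn f s + eVariationOn g s := by
  apply iSup_le
  rintro ⟨n, u, hu, us⟩
  calc ∑ i ∈ Finset.range n, edist (f (u (i+1)) + g (u (i+1))) (f (u i) + g (u i))
      ≤ ∑ i ∈ Finset.range n,
        (edist (f (u (i+1))) (f (u i)) + edist (g (u (i+1))) (g (u i))) :=
        Finset.sum_le_sum fun i _ => edist_add_add_le _ _ _ _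
    _ = (∑ i ∈ Finset.range n, edist (f (u (i+1))) (f (u i)))
        + ∑ i ∈ Finset.range n, edist (g (u (i+1))) (g (u i)) := Finset.sum_add_distrib
    _ ≤ _ := add_le_add (eVariationOn.sum_le (f := f) (n := n) hu us) (eVariationOn.sum_le (f := g) (n := n) hu us)

lemma homeo_strictMono (r : unitInterval ≃ₜ unitInterval) (h : r 0 = 0) : StrictMono r := by
  set f : ℝ → ℝ := fun x => ((r (projIcc 0 1 zero_le_one x) : unitInterval) : ℝ) with hf
  have hproj : ∀ x : unitInterval, projIcc 0 1 zero_le_one (x : ℝ) = x := by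
    intro x; rw [projIcc_of_mem _ x.2]
  have hfc : Continuous f := continuous_subtype_val.comp (r.continuous.comp continuous_projIcc)
  have hinj : InjOn f (Icc (0:ℝ) 1) := by
    intro x hx y hy hxy
    have h1 : r (projIcc 0 1 zero_le_one x) = r (projIcc 0 1 zero_le_one y) := Subtype.ext hxy
    have h2 := r.injective h1
    rw [projIcc_of_mem _ hx, projIcc_of_mem _ hy] at h2
    exact congrArg Subtype.val h2
  have hle : f 0 ≤ f 1 := by
    have h0 : f 0 = 0 := by
      have : projIcc 0 1 zero_le_one (0:ℝ) = (0 : unitInterval) := hproj 0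
      simp only [hf, this, h]; rfl
    rw [h0]; exact (r (projIcc 0 1 zero_le_one 1)).2.1
  have hmono := ContinuousOn.strictMonoOn_of_injOn_Icc zero_le_one hle hfc.continuousOn hinj
  intro x y hxy
  have h1 : f x < f y := hmono x.2 y.2 (Subtype.coe_lt_coe.mpr hxy)
  simp only [hf, hproj] at h1
  exact Subtype.coe_lt_coe.mp h1

lemma homeo_apply_one (r : unitInterval ≃ₜ unitInterval) (h : r 0 = 0) : r 1 = 1 := by
  have hm := homeo_strictMono r h
  refine le_antisymm le_one' ?_
  have : r.symm 1 ≤ 1 := le_one'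
  calc (1:unitInterval) = r (r.symm 1) := (r.apply_symm_apply 1).symm
    _ ≤ r 1 := hm.monotone this

lemma homeo_symm_strictMono (r : unitInterval ≃ₜ unitInterval) (h : r 0 = 0) :
    StrictMono r.symm := by
  have hm := homeo_strictMono r h
  intro a b hab
  rw [← hm.lt_iff_lt, r.apply_symm_apply, r.apply_symm_apply]
  exact hab

end Aux

section Main
open Set

/-- Metric balls in the space of continuous rectifiable paths under the path
Fréchet distance are path-connected. -/
theorem dFP_balls_path_connected {n : ℕ} (δ : ℝ) (hδ : 0 < δ)
    (α β₁ β₂ : unitInterval → EuclideanSpace ℝ (Fin n))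
    (hαc : Continuous α) (hαr : Rectifiable α)
    (hβ₁c : Continuous β₁) (hβ₁r : Rectifiable β₁)
    (hβ₂c : Continuous β₂) (hβ₂r : Rectifiable β₂)
    (hd₁ : dFP α β₁ < ENNReal.ofReal δ) (hd₂ : dFP α β₂ < ENNReal.ofReal δ) :
    ∃ Γ : unitInterval → unitInterval → EuclideanSpace ℝ (Fin n),
      (∀ t, Continuous (Γ t) ∧ Rectifiable (Γ t)) ∧
      Γ 0 = β₁ ∧ Γ 1 = β₂ ∧
      (∀ t : unitInterval, ∀ ε : ℝ, 0 < ε → ∃ δ' : ℝ, 0 < δ' ∧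
        ∀ s : unitInterval, |(s : ℝ) - (t : ℝ)| < δ' →
          dFP (Γ s) (Γ t) < ENNReal.ofReal ε) ∧
      (∀ t : unitInterval, dFP α (Γ t) < ENNReal.ofReal δ) := by
  unfold dFP at hd₁ hd₂
  obtain ⟨r₁, hr₁⟩ := iInf_lt_iff.mp hd₁
  obtain ⟨r₂, hr₂⟩ := iInf_lt_iff.mp hd₂
  have m₁ := homeo_strictMono r₁.1 r₁.2
  have m₂ := homeo_strictMono r₂.1 r₂.2
  have ms₁ := homeo_symm_strictMono r₁.1 r₁.2
  have ms₂ := homeo_symm_strictMono r₂.1 r₂.2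
  have hsymm0₁ : r₁.1.symm 0 = 0 := by
    apply r₁.1.injective; rw [Homeomorph.apply_symm_apply, r₁.2]
  have hsymm0₂ : r₂.1.symm 0 = 0 := by
    apply r₂.1.injective; rw [Homeomorph.apply_symm_apply, r₂.2]
  have hsymm1₁ : r₁.1.symm 1 = 1 := by
    apply r₁.1.injective; rw [Homeomorph.apply_symm_apply, homeo_apply_one r₁.1 r₁.2]
  have hsymm1₂ : r₂.1.symm 1 = 1 := by
    apply r₂.1.injective; rw [Homeomorph.apply_symm_apply, homeo_apply_one r₂.1 r₂.2]
  have memI : ∀ t s : unitInterval,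
      (1 - (t:ℝ)) * ((r₁.1.symm s : unitInterval):ℝ) + (t:ℝ) * ((r₂.1.symm s : unitInterval):ℝ)
        ∈ Set.Icc (0:ℝ) 1 := by
    intro t s
    constructor
    · nlinarith [t.2.1, t.2.2, (r₁.1.symm s).2.1, (r₂.1.symm s).2.1]
    · nlinarith [t.2.1, t.2.2, (r₁.1.symm s).2.2, (r₂.1.symm s).2.2]
  set X : unitInterval → unitInterval → unitInterval := fun t s =>
    ⟨(1 - (t:ℝ)) * ((r₁.1.symm s : unitInterval):ℝ) + (t:ℝ) * ((r₂.1.symm s : unitInterval):ℝ),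
      memI t s⟩ with hX
  have Xcont2 : Continuous (fun p : unitInterval × unitInterval => X p.1 p.2) := by
    apply Continuous.subtype_mk
    fun_prop
  have Xcont : ∀ t, Continuous (X t) := fun t =>
    Xcont2.comp (Continuous.prodMk_right t)
  have Xmono : ∀ t, StrictMono (X t) := by
    intro t a b hab
    have h1 : ((r₁.1.symm a : unitInterval):ℝ) < ((r₁.1.symm b : unitInterval):ℝ) :=
      Subtype.coe_lt_coe.mpr (ms₁ hab)
    have h2 : ((r₂.1.symm a : unitInterval):ℝ) < ((r₂.1.symm b : unitInterval):ℝ) :=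
      Subtype.coe_lt_coe.mpr (ms₂ hab)
    rw [← Subtype.coe_lt_coe]
    show (1 - (t:ℝ)) * _ + (t:ℝ) * _ < (1 - (t:ℝ)) * _ + (t:ℝ) * _
    rcases eq_or_lt_of_le t.2.1 with h0 | h0
    · rw [← h0]; simpa using h1
    · nlinarith [mul_lt_mul_of_pos_left h2 h0,
        mul_le_mul_of_nonneg_left h1.le (by linarith [t.2.2] : (0:ℝ) ≤ 1 - (t:ℝ))]
  have X0 : ∀ t, X t 0 = 0 := by
    intro t
    apply Subtype.ext
    show (1 - (t:ℝ)) * _ + (t:ℝ) * _ = 0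
    rw [hsymm0₁, hsymm0₂]
    norm_num
  have X1 : ∀ t, X t 1 = 1 := by
    intro t
    apply Subtype.ext
    show (1 - (t:ℝ)) * _ + (t:ℝ) * _ = 1
    rw [hsymm1₁, hsymm1₂]
    norm_num
  have Xsurj : ∀ t, Function.Surjective (X t) := by
    intro t c
    have := intermediate_value_univ (0 : unitInterval) 1 (Xcont t)
    apply this
    rw [X0, X1]
    exact ⟨nonneg' , le_one'⟩
  set Xiso : unitInterval → (unitInterval ≃o unitInterval) := fun t =>
    StrictMono.orderIsoOfSurjective (X t) (Xmono t) (Xsurj t) with hXiso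
  have hXisoCoe : ∀ t s, Xiso t s = X t s := fun t s => rfl
  set Xhom : unitInterval → (unitInterval ≃ₜ unitInterval) := fun t =>
    (Xiso t).toHomeomorph with hXhom
  have hXhomCoe : ∀ t s, Xhom t s = X t s := fun t s => rfl
  set Γ : unitInterval → unitInterval → EuclideanSpace ℝ (Fin n) := fun t s =>
    (1 - (t:ℝ)) • β₁ (r₁.1 (X t s)) + (t:ℝ) • β₂ (r₂.1 (X t s)) with hΓ
  have hΓc : ∀ t, Continuous (Γ t) := by
    intro t
    exact ((continuous_const (y := (1 - (t:ℝ)))).smul (hβ₁c.comp (r₁.1.continuous.comp (Xcont t)))).add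
      ((continuous_const (y := (t:ℝ))).smul (hβ₂c.comp (r₂.1.continuous.comp (Xcont t))))
  refine ⟨Γ, fun t => ⟨hΓc t, ?_⟩, ?_, ?_, ?_, ?_⟩
  · -- Rectifiable (Γ t)
    have bv : ∀ (β : unitInterval → EuclideanSpace ℝ (Fin n))
        (hβ : Rectifiable β) (r : unitInterval ≃ₜ unitInterval) (hm : StrictMono r) (c : ℝ),
        BoundedVariationOn (fun s => c • β (r (X t s))) Set.univ := by
      intro β hβ r hm c
      have hmono : Monotone (fun s => r (X t s)) := (hm.comp (Xmono t)).monotone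
      have h1 : BoundedVariationOn (fun s => β (r (X t s))) Set.univ := by
        have hle := eVariationOn.comp_le_of_monotoneOn (s := Set.univ) (t := Set.univ) β
          (fun s => r (X t s)) (hmono.monotoneOn Set.univ) (Set.mapsTo_univ _ _)
        exact ne_top_of_le_ne_top hβ hle
      exact (lipschitzWith_smul c).comp_boundedVariationOn h1
    have b1 := bv β₁ hβ₁r r₁.1 m₁ (1 - (t:ℝ))
    have b2 := bv β₂ hβ₂r r₂.1 m₂ (t:ℝ)
    intro htop
    have hle := eVariationOn_add_le (fun s => (1 - (t:ℝ)) • β₁ (r₁.1 (X t s)))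
      (fun s => (t:ℝ) • β₂ (r₂.1 (X t s))) Set.univ
    rw [htop, top_le_iff] at hle
    exact (ENNReal.add_ne_top.mpr ⟨b1, b2⟩) hle
  · -- Γ 0 = β₁
    funext s
    have hX0 : X 0 s = r₁.1.symm s := by
      apply Subtype.ext
      show (1 - ((0:unitInterval):ℝ)) * _ + ((0:unitInterval):ℝ) * _ = _
      norm_num
    show (1 - ((0:unitInterval):ℝ)) • β₁ (r₁.1 (X 0 s)) + ((0:unitInterval):ℝ) • _ = β₁ s
    rw [hX0, Homeomorph.apply_symm_apply]
    norm_num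
  · -- Γ 1 = β₂
    funext s
    have hX1 : X 1 s = r₂.1.symm s := by
      apply Subtype.ext
      show (1 - ((1:unitInterval):ℝ)) * _ + ((1:unitInterval):ℝ) * _ = _
      norm_num
    show (1 - ((1:unitInterval):ℝ)) • β₁ (r₁.1 (X 1 s)) + ((1:unitInterval):ℝ) • β₂ (r₂.1 (X 1 s)) = β₂ s
    rw [hX1, Homeomorph.apply_symm_apply]
    norm_num
  · -- continuity in t
    intro t ε hε
    have Fcont : Continuous (fun p : unitInterval × unitInterval => Γ p.1 p.2) := by
      simp only [hΓ]
      exact ((continuous_const.sub (continuous_subtype_val.comp continuous_fst)).smul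
          (hβ₁c.comp (r₁.1.continuous.comp Xcont2))).add
        ((continuous_subtype_val.comp continuous_fst).smul
          (hβ₂c.comp (r₂.1.continuous.comp Xcont2)))
    have Funif : UniformContinuous (fun p : unitInterval × unitInterval => Γ p.1 p.2) :=
      CompactSpace.uniformContinuous_of_continuous Fcont
    rw [Metric.uniformContinuous_iff] at Funif
    obtain ⟨δ', hδ', hball⟩ := Funif (ε/2) (by linarith)
    refine ⟨δ', hδ', fun s hs => ?_⟩
    have key : dFP (Γ s) (Γ t) ≤ ⨆ u, edist (Γ s u) (Γ t u) :=
      iInf_le (fun r : {r : unitInterval ≃ₜ unitInterval // r 0 = 0} =>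
        ⨆ u : unitInterval, edist (Γ s u) (Γ t (r.1 u))) ⟨Homeomorph.refl _, rfl⟩
    refine lt_of_le_of_lt key ?_
    have hb : ∀ u : unitInterval, edist (Γ s u) (Γ t u) ≤ ENNReal.ofReal (ε/2) := by
      intro u
      have hd : dist ((s,u) : unitInterval × unitInterval) ((t,u)) < δ' := by
        calc dist ((s,u) : unitInterval × unitInterval) ((t,u))
            = max (dist s t) (dist u u) := Prod.dist_eq
          _ = dist s t := by rw [dist_self, max_eq_left dist_nonneg]
          _ < δ' := by rw [Subtype.dist_eq, Real.dist_eq]; exact hs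
      have hlt := hball hd
      rw [edist_dist]
      exact ENNReal.ofReal_le_ofReal (le_of_lt hlt)
    exact lt_of_le_of_lt (iSup_le hb)
      ((ENNReal.ofReal_lt_ofReal_iff hε).mpr (by linarith))
  · -- distance bound
    intro t
    have hR0 : (Xhom t).symm 0 = 0 := by
      apply (Xhom t).injective
      rw [Homeomorph.apply_symm_apply, hXhomCoe, X0]
    have key : dFP α (Γ t) ≤ ⨆ u, edist (α u) (Γ t ((Xhom t).symm u)) :=
      iInf_le (fun r : {r : unitInterval ≃ₜ unitInterval // r 0 = 0} =>
        ⨆ u : unitInterval, edist (α u) (Γ t (r.1 u))) ⟨(Xhom t).symm, hR0⟩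
    refine lt_of_le_of_lt key ?_
    have hXX : ∀ u, X t ((Xhom t).symm u) = u := fun u => (Xiso t).apply_symm_apply u
    have pt : ∀ u : unitInterval, edist (α u) (Γ t ((Xhom t).symm u)) ≤
        max (edist (α u) (β₁ (r₁.1 u))) (edist (α u) (β₂ (r₂.1 u))) := by
      intro u
      have hΓval : Γ t ((Xhom t).symm u) =
          (1 - (t:ℝ)) • β₁ (r₁.1 u) + (t:ℝ) • β₂ (r₂.1 u) := by simp only [hΓ]; rw [hXX]
      rw [hΓval]
      set a := α u
      set x := β₁ (r₁.1 u)
      set y := β₂ (r₂.1 u)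
      have hdist : dist a ((1 - (t:ℝ)) • x + (t:ℝ) • y) ≤ max (dist a x) (dist a y) := by
        have ha : a = (1 - (t:ℝ)) • a + (t:ℝ) • a := by
          rw [← add_smul]; norm_num
        calc dist a ((1 - (t:ℝ)) • x + (t:ℝ) • y)
            = ‖((1 - (t:ℝ)) • a + (t:ℝ) • a) - ((1 - (t:ℝ)) • x + (t:ℝ) • y)‖ := by
              rw [dist_eq_norm, ← ha]
          _ = ‖(1 - (t:ℝ)) • (a - x) + (t:ℝ) • (a - y)‖ := by
              rw [smul_sub, smul_sub]; abel_nf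
          _ ≤ ‖(1 - (t:ℝ)) • (a - x)‖ + ‖(t:ℝ) • (a - y)‖ := norm_add_le _ _
          _ = (1 - (t:ℝ)) * ‖a - x‖ + (t:ℝ) * ‖a - y‖ := by
              rw [norm_smul_of_nonneg (by linarith [t.2.2]), norm_smul_of_nonneg t.2.1]
          _ ≤ (1 - (t:ℝ)) * max (dist a x) (dist a y) + (t:ℝ) * max (dist a x) (dist a y) := by
              have hx : ‖a - x‖ ≤ max (dist a x) (dist a y) := by
                rw [← dist_eq_norm]; exact le_max_left _ _
              have hy : ‖a - y‖ ≤ max (dist a x) (dist a y) := by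
                rw [← dist_eq_norm]; exact le_max_right _ _
              have h1 := mul_le_mul_of_nonneg_left hx (by linarith [t.2.2] : (0:ℝ) ≤ 1 - (t:ℝ))
              have h2 := mul_le_mul_of_nonneg_left hy t.2.1
              linarith
          _ = max (dist a x) (dist a y) := by ring_nf
      rw [edist_dist, edist_dist, edist_dist]
      rcases max_cases (dist a x) (dist a y) with ⟨heq, _⟩ | ⟨heq, _⟩
      · exact le_max_of_le_left (ENNReal.ofReal_le_ofReal (heq ▸ hdist))
      · exact le_max_of_le_right (ENNReal.ofReal_le_ofReal (heq ▸ hdist))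
    refine lt_of_le_of_lt (iSup_le fun u => (pt u).trans
      (max_le_max (le_iSup (fun v : unitInterval => edist (α v) (β₁ (r₁.1 v))) u)
        (le_iSup (fun v : unitInterval => edist (α v) (β₂ (r₂.1 v))) u))) ?_
    exact max_lt hr₁ hr₂

end Main
end

section
/- For n ≥ 2, the space of immersed rectifiable paths in ℝⁿ under the path Fréchet distance is path-connected: for any continuous, rectifiable, locally injective α, β : [0,1] → ℝⁿ, there exists a family Γ : [0,1] → ([0,1] → ℝⁿ) such that each Γ_t is continuous, rectifiable, and locally injective, d_FP(Γ_0, α) = 0, d_FP(Γ_1, β) = 0, and t ↦ Γ_t is continuous with respect to d_FP. -/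
open unitInterval

section AuxiliaryLemmas



open Real

lemma abs_cos_sub_cos_le (x y : ℝ) : |cos x - cos y| ≤ |x - y| := by
  rw [cos_sub_cos, abs_mul, abs_mul]
  have h1 : |sin ((x+y)/2)| ≤ 1 := abs_sin_le_one _
  have h2 : |sin ((x-y)/2)| ≤ |(x-y)/2| := abs_sin_le_abs
  calc |(-2:ℝ)| * |sin ((x+y)/2)| * |sin ((x-y)/2)| ≤ 2 * 1 * |(x-y)/2| := by
        rw [abs_neg, abs_two]; gcongr
    _ = |x - y| := by rw [abs_div, abs_two]; ring

lemma abs_sin_sub_sin_le (x y : ℝ) : |sin x - sin y| ≤ |x - y| := by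
  rw [sin_sub_sin, abs_mul, abs_mul]
  have h1 : |cos ((x+y)/2)| ≤ 1 := abs_cos_le_one _
  have h2 : |sin ((x-y)/2)| ≤ |(x-y)/2| := abs_sin_le_abs
  calc |(2:ℝ)| * |sin ((x-y)/2)| * |cos ((x+y)/2)| ≤ 2 * |(x-y)/2| * 1 := by
        rw [abs_two]; gcongr
    _ = |x - y| := by rw [abs_div, abs_two]; ring

section Circ
variable {n : ℕ}

noncomputable def circ (n : ℕ) (x : ℝ) : EuclideanSpace ℝ (Fin n) :=
  (WithLp.equiv 2 _).symm (fun i => if (i : ℕ) = 0 then Real.cos x else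
    if (i : ℕ) = 1 then Real.sin x else 0)

lemma circ_apply (x : ℝ) (i : Fin n) :
    circ n x i = if (i : ℕ) = 0 then Real.cos x else
      if (i : ℕ) = 1 then Real.sin x else 0 := rfl

lemma circ_continuous : Continuous (circ n) := by
  refine (PiLp.continuous_toLp (p := 2) (β := fun _ : Fin n => ℝ)).comp ?_
  refine continuous_pi fun i => ?_
  by_cases h0 : (i : ℕ) = 0 <;> by_cases h1 : (i : ℕ) = 1 <;>
    simp [h0, h1, Real.continuous_cos, Real.continuous_sin, continuous_const]

lemma sum_fin_two (hn : 2 ≤ n) (h : Fin n → ℝ) (hh : ∀ i : Fin n, 2 ≤ (i : ℕ) → h i = 0) :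
    ∑ i, h i = h ⟨0, by omega⟩ + h ⟨1, by omega⟩ := by
  have h01 : (⟨0, by omega⟩ : Fin n) ≠ ⟨1, by omega⟩ := by simp [Fin.ext_iff]
  rw [← Finset.sum_pair h01]
  refine (Finset.sum_subset (Finset.subset_univ _) ?_).symm
  intro i _ hi
  refine hh i ?_
  simp only [Finset.mem_insert, Finset.mem_singleton, Fin.ext_iff] at hi
  omega

lemma circ_zero_coord (x : ℝ) (h : 0 < n) : circ n x ⟨0, h⟩ = cos x := by
  rw [circ_apply]; simp

lemma circ_one_coord (x : ℝ) (h : 1 < n) : circ n x ⟨1, h⟩ = sin x := by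
  rw [circ_apply]; norm_num

lemma norm_circ (hn : 2 ≤ n) (x : ℝ) : ‖circ n x‖ = 1 := by
  rw [EuclideanSpace.norm_eq,
    sum_fin_two hn _ (fun i hi => by
      rw [circ_apply, if_neg (by omega), if_neg (by omega)]; simp)]
  rw [circ_zero_coord x (by omega), circ_one_coord x (by omega),
    Real.norm_eq_abs, Real.norm_eq_abs, sq_abs, sq_abs, Real.sqrt_eq_one]
  exact Real.cos_sq_add_sin_sq x

lemma dist_circ_le (hn : 2 ≤ n) (x y : ℝ) : dist (circ n x) (circ n y) ≤ 2 * |x - y| := by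
  rw [EuclideanSpace.dist_eq,
    sum_fin_two hn _ (fun i hi => by
      rw [circ_apply, circ_apply, if_neg (by omega), if_neg (by omega),
        if_neg (by omega), if_neg (by omega)]; simp)]
  rw [circ_zero_coord x (by omega), circ_one_coord x (by omega),
    circ_zero_coord y (by omega), circ_one_coord y (by omega)]
  rw [Real.dist_eq, Real.dist_eq]
  have hc := _root_.abs_cos_sub_cos_le x y
  have hs := _root_.abs_sin_sub_sin_le x y
  have h2 : |cos x - cos y| ^ 2 + |sin x - sin y| ^ 2 ≤ (2 * |x-y|) ^ 2 := by
    have h0 : (0:ℝ) ≤ |x - y| := abs_nonneg _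
    nlinarith [abs_nonneg (cos x - cos y), abs_nonneg (sin x - sin y)]
  calc √(|cos x - cos y| ^ 2 + |sin x - sin y| ^ 2) ≤ √((2 * |x-y|)^2) :=
        Real.sqrt_le_sqrt h2
    _ = 2 * |x - y| := Real.sqrt_sq (by positivity)

lemma circ_lower (hn : 2 ≤ n) {a d : ℝ} (hd : 0 < d) (hd1 : d ≤ 1) :
    (3/4) * d ≤ ‖circ n (a + d) - circ n a‖ := by
  set p : EuclideanSpace ℝ (Fin n) := circ n (a + d) - circ n a with hp
  have hp0 : p ⟨0, by omega⟩ = cos (a + d) - cos a := by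
    rw [hp, PiLp.sub_apply, circ_zero_coord _ (by omega), circ_zero_coord _ (by omega)]
  have hp1 : p ⟨1, by omega⟩ = sin (a + d) - sin a := by
    rw [hp, PiLp.sub_apply, circ_one_coord _ (by omega), circ_one_coord _ (by omega)]
  have key : sin d ≤ ‖p‖ := by
    rw [EuclideanSpace.norm_eq]
    have hsum : ‖p ⟨0, by omega⟩‖^2 + ‖p ⟨1, by omega⟩‖^2 ≤ ∑ i, ‖p i‖ ^ 2 := by
      have hsub : ∑ i ∈ ({⟨0, by omega⟩, ⟨1, by omega⟩} : Finset (Fin n)), ‖p i‖^2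
          ≤ ∑ i, ‖p i‖ ^ 2 :=
        Finset.sum_le_sum_of_subset_of_nonneg (Finset.subset_univ _)
          (fun i _ _ => by positivity)
      rwa [Finset.sum_pair (by simp [Fin.ext_iff] :
        (⟨0, by omega⟩ : Fin n) ≠ ⟨1, by omega⟩)] at hsub
    have hsin : sin d = cos a * p ⟨1, by omega⟩ - sin a * p ⟨0, by omega⟩ := by
      rw [hp0, hp1]
      have hs := Real.sin_sub (a+d) a
      simp only [add_sub_cancel_left] at hs
      linear_combination hs
    have hcs : (sin d)^2 ≤ ‖p ⟨0, by omega⟩‖^2 + ‖p ⟨1, by omega⟩‖^2 := by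
      rw [hsin, Real.norm_eq_abs, Real.norm_eq_abs, sq_abs, sq_abs]
      nlinarith [sq_nonneg (cos a * p ⟨0, by omega⟩ + sin a * p ⟨1, by omega⟩),
        Real.sin_sq_add_cos_sq a]
    have : (sin d)^2 ≤ ∑ i, ‖p i‖ ^ 2 := hcs.trans hsum
    calc sin d ≤ |sin d| := le_abs_self _
      _ = √((sin d)^2) := (Real.sqrt_sq_eq_abs _).symm
      _ ≤ √(∑ i, ‖p i‖ ^ 2) := Real.sqrt_le_sqrt this
  refine le_trans ?_ key
  have hsin := Real.sin_gt_sub_cube hd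
  have h2 : d^2 ≤ 1 := by nlinarith
  have hd3 : d^3 ≤ d := by nlinarith
  linarith

open Set unitInterval ENNReal

variable {E : Type*} [PseudoMetricSpace E]

lemma eVar_split (f : unitInterval → E) {a b c : unitInterval} (hab : a ≤ b) (hbc : b ≤ c) :
    eVariationOn f (Icc a b) + eVariationOn f (Icc b c) = eVariationOn f (Icc a c) := by
  have h := eVariationOn.Icc_add_Icc f (s := univ) hab hbc (mem_univ b)
  simpa [Set.univ_inter] using h

lemma variation_right_cont {f : unitInterval → E} (hf : Continuous f)
    (hbv : BoundedVariationOn f univ) (x : unitInterval) {ε : ℝ} (hε : 0 < ε) :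
    ∃ δ : ℝ, 0 < δ ∧ ∀ y : unitInterval, x ≤ y → (y:ℝ) - (x:ℝ) < δ →
      eVariationOn f (Icc x y) ≤ ENNReal.ofReal ε := by
  by_contra hcon
  push_neg at hcon
  have hcon' : ∀ δ : ℝ, 0 < δ → ∃ y : unitInterval, x ≤ y ∧ (y:ℝ) - (x:ℝ) < δ ∧
      ENNReal.ofReal ε < eVariationOn f (Icc x y) := by
    intro δ hδ
    obtain ⟨y, h1, h2, h3⟩ := hcon δ hδ
    exact ⟨y, h1, h2, h3⟩
  have H : ∀ z : unitInterval, x < z → ENNReal.ofReal ε < eVariationOn f (Icc x z) := by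
    intro z hz
    obtain ⟨y, hxy, hlt, hvar⟩ := hcon' ((z:ℝ) - (x:ℝ)) (by
      have : (x:ℝ) < z := hz
      linarith)
    have hyz : y ≤ z := by
      have : (y:ℝ) ≤ (z:ℝ) := by linarith
      exact_mod_cast this
    exact hvar.trans_le (eVariationOn.mono f (Icc_subset_Icc_right hyz))
  -- x < 1
  have hx1 : (x:ℝ) < 1 := by
    obtain ⟨y, hxy, _, hvar⟩ := hcon' 1 one_pos
    have hxy' : x < y := by
      rcases eq_or_lt_of_le hxy with h | h
      · exfalso
        rw [← h] at hvar
        have : eVariationOn f (Icc x x) = 0 :=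
          eVariationOn.subsingleton f (by rw [Set.Icc_self]; exact Set.subsingleton_singleton)
        rw [this] at hvar
        exact (not_lt.mpr zero_le) hvar
      · exact h
    have : (x:ℝ) < (y:ℝ) := hxy'
    have := (y.2).2
    linarith
  -- continuity at x
  obtain ⟨δ₀, hδ₀pos, hδ₀⟩ := Metric.continuousAt_iff.mp hf.continuousAt (ε/5) (by linarith)
  set y₀ : unitInterval := ⟨min 1 ((x:ℝ) + δ₀/2), by
    constructor
    · exact le_min zero_le_one (by have := x.2.1; linarith)
    · exact min_le_left _ _⟩ with hy₀def
  have hxy₀ : x < y₀ := by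
    show (x:ℝ) < (y₀:ℝ)
    exact lt_min hx1 (by linarith)
  have hy₀close : (y₀:ℝ) - (x:ℝ) ≤ δ₀/2 := by
    have : (y₀:ℝ) ≤ (x:ℝ) + δ₀/2 := min_le_right _ _
    linarith
  set W := eVariationOn f (Icc x y₀) with hWdef
  have hWε : ENNReal.ofReal ε < W := H y₀ hxy₀
  have hWtop : W ≠ ⊤ := by
    refine ne_top_of_le_ne_top hbv (eVariationOn.mono f (subset_univ _))
  set η := ENNReal.ofReal (ε/5) with hηdef
  have hηpos : η ≠ 0 := (ENNReal.ofReal_pos.mpr (by linarith)).ne'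
  have hW0 : W ≠ 0 := (lt_of_le_of_lt zero_le hWε).ne'
  have hW2 : W - η < eVariationOn f (Icc x y₀) := ENNReal.sub_lt_self hWtop hW0 hηpos
  rw [eVariationOn] at hW2
  obtain ⟨⟨m, u, hu, us⟩, hS⟩ := lt_iSup_iff.mp hW2
  set S := ∑ i ∈ Finset.range m, edist (f (u (i+1))) (f (u i)) with hSdef
  have hWS : W ≤ S + η := tsub_le_iff_right.mp hS.le
  have hclose : ∀ i, edist (f (u i)) (f x) ≤ η := by
    intro i
    have h1 : dist (u i) x < δ₀ := by
      rw [Subtype.dist_eq, Real.dist_eq, abs_of_nonneg (by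
        have := (us i).1
        have : (x:ℝ) ≤ (u i : ℝ) := this
        linarith)]
      have h2 : ((u i : ℝ)) ≤ (y₀ : ℝ) := (us i).2
      linarith
    rw [edist_dist]
    exact ENNReal.ofReal_le_ofReal (hδ₀ h1).le
  have hSsmall : ∀ (hall : ∀ i, i ≤ m → u i = x), False := by
    intro hall
    have hS0 : S = 0 := Finset.sum_eq_zero (fun i hi => by
      rw [Finset.mem_range] at hi
      rw [hall i (by omega), hall (i+1) (by omega)]
      exact edist_self _)
    rw [hS0, zero_add] at hWS
    have : ENNReal.ofReal ε < η := hWε.trans_le hWS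
    rw [hηdef] at this
    exact absurd this (not_lt.mpr (ENNReal.ofReal_le_ofReal (by linarith)))
  by_cases hex : ∃ i, x < u i
  · classical
    set j := Nat.find hex with hjdef
    have hj : x < u j := Nat.find_spec hex
    have hmin : ∀ i, i < j → u i = x := fun i hi =>
      le_antisymm (not_lt.mp (Nat.find_min hex hi)) (us i).1
    by_cases hjm : j ≤ m
    · -- split the sum
      have hsplit : S = (∑ i ∈ Finset.Ico 0 j, edist (f (u (i+1))) (f (u i))) +
          ∑ i ∈ Finset.Ico j m, edist (f (u (i+1))) (f (u i)) := by
        rw [hSdef, Finset.range_eq_Ico,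
          ← Finset.sum_Ico_consecutive _ (Nat.zero_le j) hjm]
      have hhead : (∑ i ∈ Finset.Ico 0 j, edist (f (u (i+1))) (f (u i))) ≤ η := by
        rcases Nat.eq_zero_or_pos j with hj0 | hj0
        · simp [hj0]
        · have hle : ∀ i ∈ Finset.Ico 0 j, edist (f (u (i+1))) (f (u i)) ≤
              if i = j - 1 then η else 0 := by
            intro i hi
            rw [Finset.mem_Ico] at hi
            by_cases hij : i = j - 1
            · rw [if_pos hij, hmin i hi.2]
              exact hclose (i+1)
            · rw [if_neg hij, hmin i hi.2, hmin (i+1) (by omega)]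
              simp
          calc (∑ i ∈ Finset.Ico 0 j, edist (f (u (i+1))) (f (u i)))
              ≤ ∑ i ∈ Finset.Ico 0 j, if i = j - 1 then η else 0 := Finset.sum_le_sum hle
            _ = η := by
                rw [Finset.sum_ite_eq' (Finset.Ico 0 j) (j-1) (fun _ => η),
                  if_pos (by rw [Finset.mem_Ico]; omega)]
      set T := eVariationOn f (Icc (u j) y₀) with hTdef
      have htail : (∑ i ∈ Finset.Ico j m, edist (f (u (i+1))) (f (u i))) ≤ T := by
        rw [Finset.sum_Ico_eq_sum_range]
        exact eVariationOn.sum_le (f := f) (n := m - j) (u := fun i => u (j + i))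
          (fun a b hab => hu (by omega))
          (fun i => ⟨hu (by omega), (us (j+i)).2⟩)
      set X := eVariationOn f (Icc x (u j)) with hXdef
      have hXT : X + T = W := by
        have h := eVariationOn.Icc_add_Icc f (s := Icc x y₀) (us j).1 (us j).2 (us j)
        rwa [Set.inter_eq_self_of_subset_right (Icc_subset_Icc_right (us j).2),
          Set.inter_eq_self_of_subset_right (Icc_subset_Icc_left (us j).1),
          Set.inter_self] at h
      have hXε : ENNReal.ofReal ε < X := H (u j) hj
      have hTtop : T ≠ ⊤ := by
        refine ne_top_of_le_ne_top hWtop ?_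
        rw [← hXT]; exact le_add_self
      have hfinal : X + T ≤ T + (η + η) := by
        calc X + T = W := hXT
          _ ≤ S + η := hWS
          _ ≤ (η + T) + η := by
              rw [hsplit]
              exact add_le_add (add_le_add hhead htail) le_rfl
          _ = T + (η + η) := by ring
      have hX2 : X ≤ η + η := by
        rw [add_comm X T] at hfinal
        exact (ENNReal.add_le_add_iff_left hTtop).mp (by rwa [add_comm η η] at hfinal ⊢)
      have : ENNReal.ofReal ε < η + η := hXε.trans_le hX2
      rw [hηdef, ← ENNReal.ofReal_add (by linarith) (by linarith)] at this
      exact absurd this (not_lt.mpr (ENNReal.ofReal_le_ofReal (by linarith)))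
    · exact hSsmall (fun i hi => hmin i (by omega))
  · push_neg at hex
    exact hSsmall (fun i _ => le_antisymm (hex i) (us i).1)

lemma symm_image_Icc (a b : unitInterval) : σ '' (Icc a b) = Icc (σ b) (σ a) := by
  ext z
  constructor
  · rintro ⟨w, ⟨h1, h2⟩, rfl⟩
    exact ⟨symm_le_symm.mpr h2, symm_le_symm.mpr h1⟩
  · rintro ⟨h1, h2⟩
    refine ⟨σ z, ⟨?_, ?_⟩, symm_symm z⟩
    · have := symm_le_symm.mpr h2
      rwa [symm_symm] at this
    · have := symm_le_symm.mpr h1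
      rwa [symm_symm] at this

lemma variation_left_cont {f : unitInterval → E} (hf : Continuous f)
    (hbv : BoundedVariationOn f univ) (x : unitInterval) {ε : ℝ} (hε : 0 < ε) :
    ∃ δ : ℝ, 0 < δ ∧ ∀ y : unitInterval, y ≤ x → (x:ℝ) - (y:ℝ) < δ →
      eVariationOn f (Icc y x) ≤ ENNReal.ofReal ε := by
  set g : unitInterval → E := f ∘ σ with hgdef
  have hσanti : AntitoneOn σ (univ : Set unitInterval) :=
    fun a _ b _ hab => symm_le_symm.mpr hab
  have hσsurj : Function.Surjective (σ : unitInterval → unitInterval) :=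
    Function.Involutive.surjective symm_symm
  have hgbv : BoundedVariationOn g univ := by
    have h := eVariationOn.comp_eq_of_antitoneOn f σ hσanti
    rw [Set.image_univ, hσsurj.range_eq] at h
    show eVariationOn (f ∘ σ) univ ≠ ⊤
    rw [h]
    exact hbv
  have hgc : Continuous g := hf.comp continuous_symm
  obtain ⟨δ, hδpos, hδ⟩ := variation_right_cont hgc hgbv (σ x) hε
  refine ⟨δ, hδpos, fun y hyx hclose => ?_⟩
  have h1 : σ x ≤ σ y := symm_le_symm.mpr hyx
  have h2 : ((σ y : unitInterval) : ℝ) - ((σ x : unitInterval) : ℝ) < δ := by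
    rw [coe_symm_eq, coe_symm_eq]
    linarith
  have h3 := hδ (σ y) h1 h2
  have h4 : eVariationOn g (Icc (σ x) (σ y)) = eVariationOn f (Icc y x) := by
    have h := eVariationOn.comp_eq_of_antitoneOn f σ
      (fun a _ b _ hab => symm_le_symm.mpr hab : AntitoneOn σ (Icc (σ x) (σ y)))
    rw [hgdef, h, symm_image_Icc, symm_symm, symm_symm]
  rwa [h4] at h3

noncomputable def varFun (f : unitInterval → E) : unitInterval → ℝ :=
  fun x => (eVariationOn f (Icc 0 x)).toReal

lemma eVar_Icc_ne_top {f : unitInterval → E} (hbv : BoundedVariationOn f univ)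
    (a b : unitInterval) : eVariationOn f (Icc a b) ≠ ⊤ :=
  ne_top_of_le_ne_top hbv (eVariationOn.mono f (subset_univ _))

lemma varFun_sub {f : unitInterval → E} (hbv : BoundedVariationOn f univ)
    {x y : unitInterval} (hxy : x ≤ y) :
    varFun f y - varFun f x = (eVariationOn f (Icc x y)).toReal := by
  have hsplit := eVar_split f (nonneg' : 0 ≤ x) hxy
  rw [varFun, varFun, ← hsplit, ENNReal.toReal_add (eVar_Icc_ne_top hbv _ _)
    (eVar_Icc_ne_top hbv _ _)]
  ring

lemma varFun_mono {f : unitInterval → E} (hbv : BoundedVariationOn f univ) :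
    Monotone (varFun f) := by
  intro x y hxy
  have := varFun_sub hbv hxy
  have h2 : (0:ℝ) ≤ (eVariationOn f (Icc x y)).toReal := ENNReal.toReal_nonneg
  linarith

lemma dist_le_varFun {f : unitInterval → E} (hbv : BoundedVariationOn f univ)
    {x y : unitInterval} (hxy : x ≤ y) :
    dist (f x) (f y) ≤ varFun f y - varFun f x := by
  rw [varFun_sub hbv hxy]
  exact BoundedVariationOn.dist_le (hbv.mono (subset_univ _))
    (left_mem_Icc.mpr hxy) (right_mem_Icc.mpr hxy)

lemma varFun_continuous {f : unitInterval → E} (hf : Continuous f)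
    (hbv : BoundedVariationOn f univ) : Continuous (varFun f) := by
  rw [Metric.continuous_iff]
  intro x ε hε
  obtain ⟨δr, hδrpos, hδr⟩ := variation_right_cont hf hbv x (half_pos hε)
  obtain ⟨δl, hδlpos, hδl⟩ := variation_left_cont hf hbv x (half_pos hε)
  refine ⟨min δr δl, lt_min hδrpos hδlpos, fun y hy => ?_⟩
  rw [Subtype.dist_eq, Real.dist_eq] at hy
  rw [Real.dist_eq]
  rcases le_total x y with hxy | hxy
  · have h1 : (y:ℝ) - (x:ℝ) < δr := by
      have h5 := abs_lt.mp hy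
      have h6 := min_le_left δr δl
      linarith [h5.2]
    have h2 := hδr y hxy h1
    have h3 := varFun_sub hbv hxy
    have h4 : (eVariationOn f (Icc x y)).toReal ≤ ε/2 := by
      have := ENNReal.toReal_mono ENNReal.ofReal_ne_top h2
      rwa [ENNReal.toReal_ofReal (by linarith)] at this
    rw [abs_of_nonneg (by linarith [ENNReal.toReal_nonneg (a := eVariationOn f (Icc x y))])]
    linarith
  · have h1 : (x:ℝ) - (y:ℝ) < δl := by
      have h5 := abs_lt.mp hy
      have h7 := min_le_right δr δl
      linarith [h5.1]
    have h2 := hδl y hxy h1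
    have h3 := varFun_sub hbv hxy
    have h4 : (eVariationOn f (Icc y x)).toReal ≤ ε/2 := by
      have := ENNReal.toReal_mono ENNReal.ofReal_ne_top h2
      rwa [ENNReal.toReal_ofReal (by linarith)] at this
    rw [abs_of_nonpos (by linarith [ENNReal.toReal_nonneg (a := eVariationOn f (Icc y x))])]
    linarith

lemma varFun_zero (f : unitInterval → E) : varFun f 0 = 0 := by
  rw [varFun, Set.Icc_self]
  rw [eVariationOn.subsingleton f Set.subsingleton_singleton]
  simp

lemma bv_of_dominated {f : unitInterval → E} {g : unitInterval → ℝ} (hg : Monotone g)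
    (h : ∀ x y : unitInterval, x ≤ y → dist (f x) (f y) ≤ g y - g x) :
    BoundedVariationOn f univ := by
  have hle : eVariationOn f univ ≤ ENNReal.ofReal (g 1 - g 0) := by
    apply iSup_le
    rintro ⟨m, u, hu, -⟩
    calc (∑ i ∈ Finset.range m, edist (f (u (i+1))) (f (u i)))
        ≤ ∑ i ∈ Finset.range m, ENNReal.ofReal (g (u (i+1)) - g (u i)) := by
          refine Finset.sum_le_sum fun i _ => ?_
          rw [edist_dist, dist_comm]
          exact ENNReal.ofReal_le_ofReal (h _ _ (hu (Nat.le_succ i)))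
      _ = ENNReal.ofReal (∑ i ∈ Finset.range m, (g (u (i+1)) - g (u i))) :=
          (ENNReal.ofReal_sum_of_nonneg fun i _ =>
            sub_nonneg.mpr (hg (hu (Nat.le_succ i)))).symm
      _ = ENNReal.ofReal (g (u m) - g (u 0)) := by
          rw [Finset.sum_range_sub (fun i => g (u i))]
      _ ≤ ENNReal.ofReal (g 1 - g 0) :=
          ENNReal.ofReal_le_ofReal (sub_le_sub (hg le_one') (hg nonneg'))
  exact ne_top_of_le_ne_top ENNReal.ofReal_ne_top hle


end Circ
end AuxiliaryLemmas

lemma dFP_le_sup {E : Type*} [PseudoEMetricSpace E] (f g : unitInterval → E) :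
    dFP f g ≤ ⨆ u : unitInterval, edist (f u) (g u) := by
  refine iInf_le_of_le ⟨Homeomorph.refl _, rfl⟩ (le_of_eq ?_)
  simp [Homeomorph.refl_apply]

lemma dFP_self {E : Type*} [PseudoEMetricSpace E] (f : unitInterval → E) :
    dFP f f = 0 := by
  refine le_antisymm ((dFP_le_sup f f).trans (le_of_eq ?_)) zero_le
  simp [edist_self]

open Real Set in
set_option maxHeartbeats 1600000 in
/-- For n ≥ 2, the space of immersed rectifiable paths in ℝⁿ is path-connected
under the path Fréchet distance. -/
theorem immersed_paths_path_connected (n : ℕ) (hn : 2 ≤ n)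
    (α β : unitInterval → EuclideanSpace ℝ (Fin n))
    (hαc : Continuous α) (hαr : Rectifiable α) (hαi : LocallyInjective α)
    (hβc : Continuous β) (hβr : Rectifiable β) (hβi : LocallyInjective β) :
    ∃ Γ : unitInterval → unitInterval → EuclideanSpace ℝ (Fin n),
      (∀ t, Continuous (Γ t) ∧ Rectifiable (Γ t) ∧ LocallyInjective (Γ t)) ∧
      dFP (Γ 0) α = 0 ∧ dFP (Γ 1) β = 0 ∧
      (∀ t : unitInterval, ∀ ε : ℝ, 0 < ε → ∃ δ : ℝ, 0 < δ ∧
        ∀ s : unitInterval, |(s : ℝ) - (t : ℝ)| < δ →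
          dFP (Γ s) (Γ t) < ENNReal.ofReal ε) := by
  set va : unitInterval → ℝ := varFun α with hva
  set vb : unitInterval → ℝ := varFun β with hvb
  have hvac : Continuous va := varFun_continuous hαc hαr
  have hvbc : Continuous vb := varFun_continuous hβc hβr
  have hvam : Monotone va := varFun_mono hαr
  have hvbm : Monotone vb := varFun_mono hβr
  have hdva : ∀ x y : unitInterval, x ≤ y → dist (α x) (α y) ≤ va y - va x :=
    fun x y h => dist_le_varFun hαr h
  have hdvb : ∀ x y : unitInterval, x ≤ y → dist (β x) (β y) ≤ vb y - vb x :=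
    fun x y h => dist_le_varFun hβr h
  set G : ℝ × unitInterval → EuclideanSpace ℝ (Fin n) := fun p =>
    (1 - p.1) • α p.2 + p.1 • β p.2 + (π * (p.1 * (1 - p.1))) •
      circ n (((1 - p.1) * va p.2 + p.1 * vb p.2 + (p.2 : ℝ)) / (p.1 * (1 - p.1))) with hGdef
  set Γ : unitInterval → unitInterval → EuclideanSpace ℝ (Fin n) := fun t s => G ((t : ℝ), s) with hΓdef
  -- the "clock"
  set M : ℝ → unitInterval → ℝ :=
    fun r s => (1 - r) * va s + r * vb s + (s : ℝ) with hMdef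
  have hΓapp : ∀ (t s : unitInterval), Γ t s = (1 - (t:ℝ)) • α s + (t:ℝ) • β s
      + (π * ((t:ℝ) * (1 - (t:ℝ)))) • circ n (M (t:ℝ) s / ((t:ℝ) * (1 - (t:ℝ)))) :=
    fun t s => rfl
  have hM_strict : ∀ (r : ℝ), 0 ≤ r → r ≤ 1 → ∀ s s' : unitInterval, s ≤ s' →
      (s' : ℝ) - (s : ℝ) ≤ M r s' - M r s := by
    intro r h0 h1 s s' hss
    have h2 : va s ≤ va s' := hvam hss
    have h3 : vb s ≤ vb s' := hvbm hss
    have : 0 ≤ (1 - r) * (va s' - va s) + r * (vb s' - vb s) := by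
      have := mul_nonneg (by linarith : (0:ℝ) ≤ 1 - r) (by linarith : 0 ≤ va s' - va s)
      have := mul_nonneg h0 (by linarith : 0 ≤ vb s' - vb s)
      linarith
    simp only [hMdef]
    ring_nf
    nlinarith [this]
  have hbase : ∀ (r : ℝ), 0 ≤ r → r ≤ 1 → ∀ s s' : unitInterval, s ≤ s' →
      dist ((1 - r) • α s + r • β s) ((1 - r) • α s' + r • β s')
        ≤ (M r s' - M r s) - ((s' : ℝ) - (s : ℝ)) := by
    intro r h0 h1 s s' hss
    have h4 := hdva s s' hss
    have h5 := hdvb s s' hss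
    calc dist ((1 - r) • α s + r • β s) ((1 - r) • α s' + r • β s')
        ≤ dist ((1 - r) • α s) ((1 - r) • α s') + dist (r • β s) (r • β s') :=
          dist_add_add_le _ _ _ _
      _ = |1 - r| * dist (α s) (α s') + |r| * dist (β s) (β s') := by
          rw [dist_smul₀, dist_smul₀, Real.norm_eq_abs, Real.norm_eq_abs]
      _ ≤ (1 - r) * (va s' - va s) + r * (vb s' - vb s) := by
          rw [abs_of_nonneg (by linarith), abs_of_nonneg h0]
          have hd1 : (0:ℝ) ≤ dist (α s) (α s') := dist_nonneg
          have hd2 : (0:ℝ) ≤ dist (β s) (β s') := dist_nonneg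
          have := mul_le_mul_of_nonneg_left h4 (by linarith : (0:ℝ) ≤ 1 - r)
          have := mul_le_mul_of_nonneg_left h5 h0
          linarith
      _ = (M r s' - M r s) - ((s' : ℝ) - (s : ℝ)) := by simp only [hMdef]; ring
  have hMc : ∀ r : ℝ, Continuous (fun s => M r s) :=
    fun r => ((continuous_const.mul hvac).add (continuous_const.mul hvbc)).add
      continuous_subtype_val
  have hMdiff : ∀ (r : ℝ), 0 ≤ r → r ≤ 1 → ∀ s s' : unitInterval, s ≤ s' →
      M r s' - M r s ≤ (va s' - va s) + (vb s' - vb s) + ((s':ℝ) - (s:ℝ)) := by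
    intro r h0 h1 s s' hss
    have h2 : va s ≤ va s' := hvam hss
    have h3 : vb s ≤ vb s' := hvbm hss
    simp only [hMdef]
    nlinarith [mul_nonneg h0 (by linarith : 0 ≤ va s' - va s),
      mul_nonneg h0 (by linarith : 0 ≤ vb s' - vb s)]
  have hMnonneg : ∀ (r : ℝ), 0 ≤ r → r ≤ 1 → ∀ s s' : unitInterval, s ≤ s' →
      0 ≤ M r s' - M r s := by
    intro r h0 h1 s s' hss
    have := hM_strict r h0 h1 s s' hss
    have : (s:ℝ) ≤ (s':ℝ) := hss
    linarith [hM_strict r h0 h1 s s' hss]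
  -- wiggle distance bound
  have hwig : ∀ (r : ℝ), ∀ x y : ℝ,
      dist ((π * (r * (1 - r))) • circ n (x / (r * (1 - r))))
        ((π * (r * (1 - r))) • circ n (y / (r * (1 - r)))) ≤ 2 * π * |x - y| := by
    intro r x y
    rw [dist_smul₀, Real.norm_eq_abs]
    by_cases he : r * (1 - r) = 0
    · rw [he] 
      simp [dist_nonneg, abs_nonneg]
      positivity
    · calc |π * (r * (1-r))| * dist (circ n (x / (r * (1-r)))) (circ n (y / (r * (1-r))))
          ≤ |π * (r * (1-r))| * (2 * |x / (r * (1-r)) - y / (r * (1-r))|) := by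
            refine mul_le_mul_of_nonneg_left (dist_circ_le hn _ _) (abs_nonneg _)
        _ = 2 * π * |x - y| := by
            rw [abs_mul, div_sub_div_same, abs_div]
            rw [abs_of_nonneg Real.pi_pos.le]
            field_simp
  -- continuity of each Γ t
  have hcont : ∀ t : unitInterval, Continuous (Γ t) := by
    intro t
    rw [show Γ t = fun s => (1 - (t:ℝ)) • α s + (t:ℝ) • β s
      + (π * ((t:ℝ) * (1 - (t:ℝ)))) • circ n (M (t:ℝ) s / ((t:ℝ) * (1 - (t:ℝ))))
      from funext (hΓapp t)]
    refine ((continuous_const.fun_smul hαc).fun_add (continuous_const.fun_smul hβc)).fun_add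
      (continuous_const.fun_smul (circ_continuous.comp' ?_))
    exact (hMc (t:ℝ)).div_const _
  -- Γ 0 = α, Γ 1 = β
  have hΓ0 : Γ 0 = α := by
    funext u
    rw [hΓapp 0 u, Icc.coe_zero]
    simp
  have hΓ1 : Γ 1 = β := by
    funext u
    rw [hΓapp 1 u, Icc.coe_one]
    simp
  -- bounded variation of each Γ t
  have hrect : ∀ t : unitInterval, BoundedVariationOn (Γ t) Set.univ := by
    intro t
    set r : ℝ := (t : ℝ) with hr
    have h0 : 0 ≤ r := t.2.1
    have h1 : r ≤ 1 := t.2.2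
    refine bv_of_dominated (g := fun s => (1 + 2*π) * (va s + vb s + (s:ℝ))) ?_ ?_
    · intro x y hxy
      have h2 : va x ≤ va y := hvam hxy
      have h3 : vb x ≤ vb y := hvbm hxy
      have h4 : (x:ℝ) ≤ (y:ℝ) := hxy
      dsimp only
      have h5 : va x + vb x + (x:ℝ) ≤ va y + vb y + (y:ℝ) := by linarith
      exact mul_le_mul_of_nonneg_left h5 (by positivity)
    · intro x y hxy
      have hb := hbase r h0 h1 x y hxy
      have hw := hwig r (M r x) (M r y)
      have hMd := hMdiff r h0 h1 x y hxy
      have hMn := hMnonneg r h0 h1 x y hxy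
      have hxy' : (x:ℝ) ≤ (y:ℝ) := hxy
      calc dist (Γ t x) (Γ t y)
          = dist ((1 - r) • α x + r • β x + (π * (r * (1 - r))) • circ n (M r x / (r * (1 - r))))
              ((1 - r) • α y + r • β y + (π * (r * (1 - r))) • circ n (M r y / (r * (1 - r)))) := by
            rw [hΓapp t x, hΓapp t y]
        _ ≤ dist ((1 - r) • α x + r • β x) ((1 - r) • α y + r • β y) +
            dist ((π * (r * (1 - r))) • circ n (M r x / (r * (1 - r))))
              ((π * (r * (1 - r))) • circ n (M r y / (r * (1 - r)))) :=
            dist_add_add_le _ _ _ _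
        _ ≤ ((M r y - M r x) - ((y:ℝ) - (x:ℝ))) + 2 * π * |M r x - M r y| := by
            exact add_le_add hb hw
        _ ≤ (1 + 2*π) * ((va y + vb y + (y:ℝ)) - (va x + vb x + (x:ℝ))) := by
            rw [abs_of_nonpos (by linarith), neg_sub]
            have h2 : va x ≤ va y := hvam hxy
            have h3 : vb x ≤ vb y := hvbm hxy
            have hπ : (0:ℝ) < π := Real.pi_pos
            nlinarith
        _ = (fun s : unitInterval => (1 + 2*π) * (va s + vb s + (s:ℝ))) y -
            (fun s : unitInterval => (1 + 2*π) * (va s + vb s + (s:ℝ))) x := by dsimp only; ring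
  -- local injectivity of each Γ t
  have hinj : ∀ t : unitInterval, ∀ x, ∃ U ∈ nhds x, Set.InjOn (Γ t) U := by
    intro t
    by_cases ht0 : t = 0
    · rw [ht0, hΓ0]; exact hαi
    by_cases ht1 : t = 1
    · rw [ht1, hΓ1]; exact hβi
    intro x
    set r : ℝ := (t:ℝ) with hrdef
    have hr0 : r ≠ 0 := fun h => ht0 (Subtype.ext (h.trans Icc.coe_zero.symm))
    have hr1 : r ≠ 1 := fun h => ht1 (Subtype.ext (h.trans Icc.coe_one.symm))
    have h0 : 0 < r := (t.2.1).lt_of_ne (fun h => hr0 h.symm)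
    have h1 : r < 1 := (t.2.2).lt_of_ne hr1
    set e : ℝ := r * (1 - r) with hedef
    have he : 0 < e := mul_pos h0 (by linarith)
    obtain ⟨δ, hδpos, hδ⟩ := Metric.continuousAt_iff.mp (hMc r).continuousAt (e/4)
      (by linarith)
    refine ⟨Metric.ball x δ, Metric.ball_mem_nhds x hδpos, ?_⟩
    have key : ∀ s s' : unitInterval, s ∈ Metric.ball x δ → s' ∈ Metric.ball x δ →
        s < s' → Γ t s ≠ Γ t s' := by
      intro s s' hs hs' hss hEq
      have hss' : s ≤ s' := hss.le
      have hds : (s:ℝ) < (s':ℝ) := hss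
      set d : ℝ := M r s' - M r s with hddef
      have hd0 : 0 < d := by
        have := hM_strict r h0.le h1.le s s' hss'
        simp only [hddef]
        linarith
      have hsx : |M r s - M r x| < e/4 := by
        have := hδ (Metric.mem_ball.mp hs)
        rwa [Real.dist_eq] at this
      have hs'x : |M r s' - M r x| < e/4 := by
        have := hδ (Metric.mem_ball.mp hs')
        rwa [Real.dist_eq] at this
      have hde : d < e/2 := by
        have e1 := abs_lt.mp hsx
        have e2 := abs_lt.mp hs'x
        simp only [hddef]
        linarith [e1.1, e1.2, e2.1, e2.2]
      have hde1 : d / e ≤ 1 := by rw [div_le_one he]; linarith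
      have hdepos : 0 < d / e := div_pos hd0 he
      rw [hΓapp t s, hΓapp t s'] at hEq
      set A : EuclideanSpace ℝ (Fin n) := (1 - r) • α s + r • β s with hA
      set A' : EuclideanSpace ℝ (Fin n) := (1 - r) • α s' + r • β s' with hA'
      set W : EuclideanSpace ℝ (Fin n) := (π * e) • circ n (M r s / e) with hW
      set W' : EuclideanSpace ℝ (Fin n) := (π * e) • circ n (M r s' / e) with hW'
      have hEq' : W' - W = A - A' := by
        rw [sub_eq_sub_iff_add_eq_add]
        calc W' + A' = A' + W' := add_comm _ _
          _ = A + W := hEq.symm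
      have harg : M r s' / e = M r s / e + d / e := by
        rw [hddef]; ring
      have hlow : (3 * π / 4) * d ≤ ‖W' - W‖ := by
        rw [hW, hW', ← smul_sub, norm_smul, Real.norm_eq_abs,
          abs_of_nonneg (by positivity : (0:ℝ) ≤ π * e), harg]
        have := circ_lower hn (a := M r s / e) hdepos hde1
        calc (3 * π / 4) * d = (π * e) * ((3/4) * (d / e)) := by field_simp
          _ ≤ (π * e) * ‖circ n (M r s / e + d / e) - circ n (M r s / e)‖ := by
              refine mul_le_mul_of_nonneg_left this (by positivity)
      have hhigh : ‖A - A'‖ ≤ d - ((s':ℝ) - (s:ℝ)) := by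
        rw [← dist_eq_norm]
        exact hbase r h0.le h1.le s s' hss'
      rw [hEq'] at hlow
      have := hlow.trans hhigh
      nlinarith [Real.pi_gt_three, hd0, hds]
    intro s hs s' hs' hEq
    by_contra hne
    rcases lt_or_gt_of_ne hne with h | h
    · exact key s s' hs hs' h hEq
    · exact key s' s hs' hs h hEq.symm
  -- bounds for α and β
  obtain ⟨Ca, hCa⟩ := isCompact_univ.exists_bound_of_continuousOn hαc.continuousOn
  obtain ⟨Cb, hCb⟩ := isCompact_univ.exists_bound_of_continuousOn hβc.continuousOn
  have hCa0 : 0 ≤ Ca := le_trans (norm_nonneg _) (hCa 0 trivial)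
  have hCb0 : 0 ≤ Cb := le_trans (norm_nonneg _) (hCb 0 trivial)
  -- quantitative continuity in t
  have CLM : ∀ t : unitInterval, ∀ ε' : ℝ, 0 < ε' → ∃ δ : ℝ, 0 < δ ∧
      ∀ s : unitInterval, |(s:ℝ) - (t:ℝ)| < δ → ∀ u, dist (Γ s u) (Γ t u) ≤ ε' := by
    intro t ε' hε'
    by_cases ht0 : t = 0
    · refine ⟨min 1 (ε' / (Ca + Cb + π + 1)), lt_min one_pos (by positivity), ?_⟩
      intro s hs u
      rw [ht0] at hs ⊢
      rw [Icc.coe_zero, sub_zero] at hs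
      have hs0 : (s:ℝ) < min 1 (ε' / (Ca + Cb + π + 1)) := by
        have := le_abs_self (s:ℝ)
        linarith [this.trans_lt hs]
      set q : ℝ := (s:ℝ) with hq
      have hq0 : 0 ≤ q := s.2.1
      have hq1 : q ≤ 1 := s.2.2
      have hΓ0u : Γ 0 u = α u := congrFun hΓ0 u
      rw [hΓ0u, dist_eq_norm, hΓapp s u]
      have hshape : (1 - q) • α u + q • β u
          + (π * (q * (1 - q))) • circ n (M q u / (q * (1 - q))) - α u
          = q • (β u - α u) + (π * (q * (1 - q))) • circ n (M q u / (q * (1 - q))) := by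
        rw [sub_smul, one_smul, smul_sub]
        abel
      rw [hshape]
      have h1 : ‖q • (β u - α u)‖ ≤ q * (Ca + Cb) := by
        rw [norm_smul, Real.norm_eq_abs, abs_of_nonneg hq0]
        refine mul_le_mul_of_nonneg_left ?_ hq0
        calc ‖β u - α u‖ ≤ ‖β u‖ + ‖α u‖ := norm_sub_le _ _
          _ ≤ Ca + Cb := by have := hCa u trivial; have := hCb u trivial; linarith
      have hqq : 0 ≤ q * (1 - q) := mul_nonneg hq0 (by linarith)
      have h2 : ‖(π * (q * (1 - q))) • circ n (M q u / (q * (1 - q)))‖ ≤ π * q := by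
        rw [norm_smul, Real.norm_eq_abs, norm_circ hn, mul_one,
          abs_of_nonneg (mul_nonneg Real.pi_pos.le hqq)]
        refine mul_le_mul_of_nonneg_left ?_ Real.pi_pos.le
        nlinarith
      have h3 := norm_add_le (q • (β u - α u))
        ((π * (q * (1 - q))) • circ n (M q u / (q * (1 - q))))
      have h4 : q ≤ ε' / (Ca + Cb + π + 1) := le_of_lt (lt_of_lt_of_le hs0 (min_le_right _ _))
      have h5 : q * (Ca + Cb + π) ≤ ε' := by
        have h6 : 0 < Ca + Cb + π + 1 := by positivity
        rw [le_div_iff₀ h6] at h4 <;> nlinarith [Real.pi_pos]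
      nlinarith [Real.pi_pos]
    by_cases ht1 : t = 1
    · refine ⟨min 1 (ε' / (Ca + Cb + π + 1)), lt_min one_pos (by positivity), ?_⟩
      intro s hs u
      rw [ht1] at hs ⊢
      rw [Icc.coe_one] at hs
      have hs0 : 1 - (s:ℝ) < min 1 (ε' / (Ca + Cb + π + 1)) := by
        have := neg_abs_le ((s:ℝ) - 1)
        linarith [abs_lt.mp hs]
      set q : ℝ := (s:ℝ) with hq
      have hq0 : 0 ≤ q := s.2.1
      have hq1 : q ≤ 1 := s.2.2
      have hΓ1u : Γ 1 u = β u := congrFun hΓ1 u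
      rw [hΓ1u, dist_eq_norm, hΓapp s u]
      have hshape : (1 - q) • α u + q • β u
          + (π * (q * (1 - q))) • circ n (M q u / (q * (1 - q))) - β u
          = (1 - q) • (α u - β u) + (π * (q * (1 - q))) • circ n (M q u / (q * (1 - q))) := by
        rw [smul_sub, sub_smul, sub_smul, one_smul, one_smul]
        abel
      rw [hshape]
      have h1 : ‖(1 - q) • (α u - β u)‖ ≤ (1 - q) * (Ca + Cb) := by
        rw [norm_smul, Real.norm_eq_abs, abs_of_nonneg (by linarith)]
        refine mul_le_mul_of_nonneg_left ?_ (by linarith)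
        calc ‖α u - β u‖ ≤ ‖α u‖ + ‖β u‖ := norm_sub_le _ _
          _ ≤ Ca + Cb := by have := hCa u trivial; have := hCb u trivial; linarith
      have hqq : 0 ≤ q * (1 - q) := mul_nonneg hq0 (by linarith)
      have h2 : ‖(π * (q * (1 - q))) • circ n (M q u / (q * (1 - q)))‖ ≤ π * (1 - q) := by
        rw [norm_smul, Real.norm_eq_abs, norm_circ hn, mul_one,
          abs_of_nonneg (mul_nonneg Real.pi_pos.le hqq)]
        refine mul_le_mul_of_nonneg_left ?_ Real.pi_pos.le
        nlinarith
      have h3 := norm_add_le ((1 - q) • (α u - β u))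
        ((π * (q * (1 - q))) • circ n (M q u / (q * (1 - q))))
      have h4 : 1 - q ≤ ε' / (Ca + Cb + π + 1) :=
        le_of_lt (lt_of_lt_of_le hs0 (min_le_right _ _))
      have h5 : (1 - q) * (Ca + Cb + π) ≤ ε' := by
        have h6 : 0 < Ca + Cb + π + 1 := by positivity
        rw [le_div_iff₀ h6] at h4 <;> nlinarith [Real.pi_pos]
      nlinarith [Real.pi_pos]
    -- interior case
    have hr0 : (t:ℝ) ≠ 0 := fun h => ht0 (Subtype.ext (h.trans Icc.coe_zero.symm))
    have hr1 : (t:ℝ) ≠ 1 := fun h => ht1 (Subtype.ext (h.trans Icc.coe_one.symm))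
    have h0 : 0 < (t:ℝ) := (t.2.1).lt_of_ne (fun h => hr0 h.symm)
    have h1 : (t:ℝ) < 1 := (t.2.2).lt_of_ne hr1
    set K : Set (ℝ × unitInterval) :=
      Icc ((t:ℝ)/2) ((1+(t:ℝ))/2) ×ˢ (univ : Set unitInterval) with hK
    have hKc : IsCompact K := isCompact_Icc.prod isCompact_univ
    have hGK : ContinuousOn G K := by
      refine ContinuousOn.add (ContinuousOn.add ?_ ?_) ?_
      · exact (Continuous.smul (continuous_const.sub continuous_fst)
          (hαc.comp continuous_snd)).continuousOn
      · exact (continuous_fst.smul (hβc.comp continuous_snd)).continuousOn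
      · have hne : ∀ p ∈ K, p.1 * (1 - p.1) ≠ 0 := by
          rintro ⟨p1, p2⟩ ⟨⟨hp1, hp2⟩, -⟩
          have ha : 0 < p1 := lt_of_lt_of_le (by linarith) hp1
          have hb : p1 < 1 := lt_of_le_of_lt hp2 (by linarith)
          exact (_root_.mul_pos (by linarith) (by linarith)).ne'
        have hnum : Continuous (fun p : ℝ × unitInterval =>
            (1 - p.1) * va p.2 + p.1 * vb p.2 + (p.2:ℝ)) :=
          (((continuous_const.sub continuous_fst).mul
            (hvac.comp continuous_snd)).add
            (continuous_fst.mul (hvbc.comp continuous_snd))).add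
            (continuous_subtype_val.comp continuous_snd)
        have hden : Continuous (fun p : ℝ × unitInterval => p.1 * (1 - p.1)) :=
          continuous_fst.mul (continuous_const.sub continuous_fst)
        have hfrac : ContinuousOn (fun p : ℝ × unitInterval =>
            ((1 - p.1) * va p.2 + p.1 * vb p.2 + (p.2:ℝ)) / (p.1 * (1 - p.1))) K :=
          hnum.continuousOn.div hden.continuousOn hne
        have hcircp : ContinuousOn (fun p : ℝ × unitInterval =>
            circ n (((1 - p.1) * va p.2 + p.1 * vb p.2 + (p.2:ℝ)) / (p.1 * (1 - p.1)))) K :=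
          circ_continuous.comp_continuousOn hfrac
        have hscal : Continuous (fun p : ℝ × unitInterval => π * (p.1 * (1 - p.1))) :=
          continuous_const.mul hden
        exact hscal.continuousOn.smul hcircp
    have hGu := hKc.uniformContinuousOn_of_continuous hGK
    rw [Metric.uniformContinuousOn_iff] at hGu
    obtain ⟨δ₀, hδ₀pos, hδ₀⟩ := hGu ε' hε'
    refine ⟨min δ₀ (min ((t:ℝ)/2) ((1-(t:ℝ))/2)),
      lt_min hδ₀pos (lt_min (by linarith) (by linarith)), ?_⟩
    intro s hs u
    have habs := abs_lt.mp hs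
    have hm1 := min_le_left δ₀ (min ((t:ℝ)/2) ((1-(t:ℝ))/2))
    have hm2 := (min_le_right δ₀ _).trans (min_le_left ((t:ℝ)/2) ((1-(t:ℝ))/2))
    have hm3 := (min_le_right δ₀ _).trans (min_le_right ((t:ℝ)/2) ((1-(t:ℝ))/2))
    have hsK : ((s:ℝ), u) ∈ K := by
      refine ⟨⟨?_, ?_⟩, trivial⟩ <;> simp only [] <;> [linarith [habs.1]; linarith [habs.2]]
    have htK : ((t:ℝ), u) ∈ K := ⟨⟨by linarith, by linarith⟩, trivial⟩
    have hd : dist ((s:ℝ), u) ((t:ℝ), u) < δ₀ := by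
      rw [Prod.dist_eq]
      rw [dist_self, Real.dist_eq]
      rw [max_eq_left (abs_nonneg _)]
      linarith
    exact (hδ₀ _ hsK _ htK hd).le
  -- assemble
  refine ⟨Γ, fun t => ⟨hcont t, hrect t, hinj t⟩, ?_, ?_, ?_⟩
  · rw [hΓ0]; exact dFP_self α
  · rw [hΓ1]; exact dFP_self β
  · intro t ε hε
    obtain ⟨δ, hδpos, hδ⟩ := CLM t (ε/2) (half_pos hε)
    refine ⟨δ, hδpos, fun s hs => ?_⟩
    calc dFP (Γ s) (Γ t) ≤ ⨆ u : unitInterval, edist (Γ s u) (Γ t u) := dFP_le_sup _ _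
      _ ≤ ENNReal.ofReal (ε/2) := by
          refine iSup_le fun u => ?_
          rw [edist_dist]
          exact ENNReal.ofReal_le_ofReal (hδ s hs u)
      _ < ENNReal.ofReal ε :=
          (ENNReal.ofReal_lt_ofReal_iff hε).mpr (by linarith)
end

section
/- For n = 1, the space of immersed paths in ℝ under the path Fréchet distance is not path-connected: for α, β : [0,1] → ℝ given by α(t) = t and β(t) = 1 − t (both continuous, rectifiable, and locally injective), there is no family Γ : [0,1] → ([0,1] → ℝ) such that each Γ_t is continuous and locally injective, d_FP(Γ_0, α) = 0, d_FP(Γ_1, β) = 0, and t ↦ Γ_t is continuous with respect to d_FP. -/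
open unitInterval

lemma helper_no_max {g : ℝ → ℝ} {a b m : ℝ} (ha : a < m) (hb : m < b)
    (hcont : ContinuousOn g (Set.Icc a b)) (hinj : Set.InjOn g (Set.Icc a b))
    (hmax : ∀ x ∈ Set.Icc a b, g x ≤ g m) : False := by
  have hab : a ≤ b := (ha.trans hb).le
  have hma : m ∈ Set.Icc a b := ⟨ha.le, hb.le⟩
  rcases hcont.strictMonoOn_of_injOn_Icc' hab hinj with h | h
  · exact absurd (h hma ⟨hab, le_refl b⟩ hb) (not_lt.2 (hmax b ⟨hab, le_refl b⟩))
  · exact absurd (h ⟨le_refl a, hab⟩ hma ha) (not_lt.2 (hmax a ⟨le_refl a, hab⟩))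

lemma no_interior_max {Γ : unitInterval → ℝ} (hc : Continuous Γ)
    (hli : LocallyInjective Γ) (p : unitInterval) (h0 : (0:ℝ) < p) (h1 : (p:ℝ) < 1)
    (hmax : ∀ x : unitInterval, Γ x ≤ Γ p) : False := by
  obtain ⟨U, hU, hinj⟩ := hli p
  obtain ⟨ε, hε, hball⟩ := Metric.mem_nhds_iff.1 hU
  set g : ℝ → ℝ := fun x => Γ (Set.projIcc 0 1 zero_le_one x) with hg
  set a := max 0 ((p:ℝ) - ε/2) with hadef
  set b := min 1 ((p:ℝ) + ε/2) with hbdef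
  have ha : a < (p:ℝ) := max_lt h0 (by linarith)
  have hb : (p:ℝ) < b := lt_min h1 (by linarith)
  have hsub : ∀ x ∈ Set.Icc a b, x ∈ Set.Icc (0:ℝ) 1 := fun x hx =>
    ⟨le_trans (le_max_left _ _) hx.1, le_trans hx.2 (min_le_left _ _)⟩
  have hmem : ∀ x (hx : x ∈ Set.Icc a b),
      (⟨x, hsub x hx⟩ : unitInterval) ∈ U := by
    intro x hx
    apply hball
    have : dist (⟨x, hsub x hx⟩ : unitInterval) p = |x - (p:ℝ)| := by
      rw [Subtype.dist_eq, Real.dist_eq]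
    rw [Metric.mem_ball, this]
    have h1' : x - (p:ℝ) ≤ ε/2 := by
      have := hx.2; have := min_le_right 1 ((p:ℝ) + ε/2); linarith [hx.2,
        min_le_right (1:ℝ) ((p:ℝ) + ε/2)]
    have h2' : -(ε/2) ≤ x - (p:ℝ) := by
      have := le_max_right (0:ℝ) ((p:ℝ) - ε/2); linarith [hx.1]
    calc |x - (p:ℝ)| ≤ ε/2 := abs_le.2 ⟨h2', h1'⟩
      _ < ε := by linarith
  have hproj : ∀ x (hx : x ∈ Set.Icc a b),
      Set.projIcc (0:ℝ) 1 zero_le_one x = ⟨x, hsub x hx⟩ := fun x hx =>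
    Set.projIcc_of_mem zero_le_one (hsub x hx)
  have hinjg : Set.InjOn g (Set.Icc a b) := by
    intro x hx y hy hxy
    rw [hg] at hxy
    simp only [hproj x hx, hproj y hy] at hxy
    have := hinj (hmem x hx) (hmem y hy) hxy
    exact congrArg Subtype.val this
  have hcontg : ContinuousOn g (Set.Icc a b) :=
    (hc.comp continuous_projIcc).continuousOn
  have hgp : g (p:ℝ) = Γ p := by
    rw [hg]; simp only [Set.projIcc_of_mem zero_le_one p.2]
  have hmaxg : ∀ x ∈ Set.Icc a b, g x ≤ g (p:ℝ) := by
    intro x hx; rw [hgp]; exact hmax _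
  exact helper_no_max ha hb hcontg hinjg hmaxg

lemma endpoints_ne {Γ : unitInterval → ℝ} (hc : Continuous Γ)
    (hli : LocallyInjective Γ) : Γ 0 ≠ Γ 1 := by
  intro h01
  obtain ⟨p, -, hp'⟩ := isCompact_univ.exists_isMaxOn (Set.univ_nonempty) hc.continuousOn
  obtain ⟨q, -, hq'⟩ := isCompact_univ.exists_isMinOn (Set.univ_nonempty) hc.continuousOn
  have hp : ∀ x : unitInterval, Γ x ≤ Γ p := fun x => hp' (Set.mem_univ x)
  have hq : ∀ x : unitInterval, Γ q ≤ Γ x := fun x => hq' (Set.mem_univ x)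
  by_cases hΓp : Γ 0 < Γ p
  · have hp0 : p ≠ 0 := by intro h; rw [h] at hΓp; exact lt_irrefl _ hΓp
    have hp1 : p ≠ 1 := by intro h; rw [h, ← h01] at hΓp; exact lt_irrefl _ hΓp
    have h0 : (0:ℝ) < p := lt_of_le_of_ne p.2.1 (fun h => hp0 (by ext; exact h.symm))
    have h1 : (p:ℝ) < 1 := lt_of_le_of_ne p.2.2 (fun h => hp1 (by ext; exact h))
    exact no_interior_max hc hli p h0 h1 hp
  · by_cases hΓq : Γ q < Γ 0
    · have hq0 : q ≠ 0 := by intro h; rw [h] at hΓq; exact lt_irrefl _ hΓq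
      have hq1 : q ≠ 1 := by intro h; rw [h, ← h01] at hΓq; exact lt_irrefl _ hΓq
      have h0 : (0:ℝ) < q := lt_of_le_of_ne q.2.1 (fun h => hq0 (by ext; exact h.symm))
      have h1 : (q:ℝ) < 1 := lt_of_le_of_ne q.2.2 (fun h => hq1 (by ext; exact h))
      refine no_interior_max (Γ := -Γ) (by continuity) ?_ q h0 h1 ?_
      · intro x
        obtain ⟨U, hU, hinj⟩ := hli x
        exact ⟨U, hU, fun u hu v hv huv => hinj hu hv (neg_injective huv)⟩
      · intro x; simp only [Pi.neg_apply, neg_le_neg_iff]; exact hq x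
    · -- Γ is constant
      push_neg at hΓp hΓq
      have hconst : ∀ x : unitInterval, Γ x = Γ 0 :=
        fun x => le_antisymm (le_trans (hp x) hΓp) (le_trans hΓq (hq x))
      obtain ⟨U, hU, hinj⟩ := hli 0
      obtain ⟨ε, hε, hball⟩ := Metric.mem_nhds_iff.1 hU
      set y : unitInterval := ⟨min (ε/2) 1, ⟨le_min (by linarith) zero_le_one, min_le_right _ _⟩⟩
        with hy
      have hyU : y ∈ U := by
        apply hball
        rw [Metric.mem_ball, Subtype.dist_eq, Real.dist_eq]
        have : |(y:ℝ) - ((0:unitInterval):ℝ)| = min (ε/2) 1 := by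
          simp [hy, abs_of_nonneg (le_min (by linarith : (0:ℝ) ≤ ε/2) zero_le_one)]
        rw [this]
        exact lt_of_le_of_lt (min_le_left _ _) (by linarith)
      have h0U : (0:unitInterval) ∈ U := mem_of_mem_nhds hU
      have : y = 0 := hinj hyU h0U (by rw [hconst y])
      have : min (ε/2) 1 = 0 := congrArg Subtype.val this
      have : (0:ℝ) < min (ε/2) 1 := lt_min (by linarith) one_pos
      linarith



lemma homeo_fix_one (r : unitInterval ≃ₜ unitInterval) (h0 : r 0 = 0) : r 1 = 1 := by
  set h : ℝ → ℝ := fun x => ((r (Set.projIcc 0 1 zero_le_one x)) : ℝ) with hh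
  have hcont : Continuous h := continuous_subtype_val.comp (r.continuous.comp continuous_projIcc)
  have hproj : ∀ x : unitInterval, Set.projIcc (0:ℝ) 1 zero_le_one (x:ℝ) = x := by
    intro x; rw [Set.projIcc_of_mem zero_le_one x.2]
  have hval : ∀ x : unitInterval, h (x:ℝ) = ((r x : unitInterval) : ℝ) := by
    intro x; rw [hh]; simp only [hproj]
  have hinj : Set.InjOn h (Set.Icc (0:ℝ) 1) := by
    intro x hx y hy hxy
    rw [hh] at hxy
    simp only [Set.projIcc_of_mem zero_le_one hx, Set.projIcc_of_mem zero_le_one hy] at hxy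
    have := r.injective (Subtype.ext hxy)
    exact congrArg Subtype.val this
  have h00 : h 0 = 0 := by
    have := hval 0; simpa [h0] using this
  have hval1 : h 1 = ((r 1 : unitInterval) : ℝ) := by
    have := hval 1; simpa using this
  rcases hcont.continuousOn.strictMonoOn_of_injOn_Icc' zero_le_one hinj with mono | anti
  · obtain ⟨x, hx⟩ := r.surjective 1
    have hx1 : h (x:ℝ) = 1 := by rw [hval, hx]; rfl
    have hle : h (x:ℝ) ≤ h 1 :=
      mono.monotoneOn ⟨x.2.1, x.2.2⟩ ⟨zero_le_one, le_refl 1⟩ x.2.2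
    have hub : h 1 ≤ 1 := by rw [hval1]; exact (r 1).2.2
    have : h 1 = 1 := le_antisymm hub (hx1 ▸ hle)
    rw [hval1] at this
    exact Subtype.ext this
  · exfalso
    have := anti ⟨le_refl 0, zero_le_one⟩ ⟨zero_le_one, le_refl 1⟩ one_pos
    rw [h00] at this
    have hnn : (0:ℝ) ≤ h 1 := by rw [hval1]; exact (r 1).2.1
    linarith


lemma dFP_ge_zero {E : Type*} [PseudoEMetricSpace E] (α β : unitInterval → E) :
    edist (α 0) (β 0) ≤ dFP α β := by
  refine le_iInf fun r => ?_
  have := le_iSup (fun t => edist (α t) (β (r.1 t))) 0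
  rwa [r.2] at this

lemma dFP_ge_one {E : Type*} [PseudoEMetricSpace E] (α β : unitInterval → E) :
    edist (α 1) (β 1) ≤ dFP α β := by
  refine le_iInf fun r => ?_
  have := le_iSup (fun t => edist (α t) (β (r.1 t))) 1
  rwa [homeo_fix_one r.1 r.2] at this


/-- For n = 1, the space of immersed paths in ℝ under the path Fréchet
distance is not path-connected: there is no continuous family of locally
injective paths from α(t) = t to β(t) = 1 - t. -/
theorem immersed_paths_not_path_connected_dim_one :
    ¬ ∃ Γ : unitInterval → unitInterval → ℝ,
      (∀ t, Continuous (Γ t) ∧ LocallyInjective (Γ t)) ∧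
      dFP (Γ 0) (fun t : unitInterval => (t : ℝ)) = 0 ∧
      dFP (Γ 1) (fun t : unitInterval => 1 - (t : ℝ)) = 0 ∧
      (∀ t : unitInterval, ∀ ε : ℝ, 0 < ε → ∃ δ : ℝ, 0 < δ ∧
        ∀ s : unitInterval, |(s : ℝ) - (t : ℝ)| < δ →
          dFP (Γ s) (Γ t) < ENNReal.ofReal ε) := by
  rintro ⟨Γ, hΓ, h0, h1, hcont⟩
  -- endpoint values of Γ 0 and Γ 1
  have edz : ∀ {x y : ℝ}, edist x y = 0 → x = y := fun h => by
    exact edist_eq_zero.1 (le_antisymm (le_of_eq h) zero_le) |>.symm ▸ rfl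
  have hΓ00 : Γ 0 0 = 0 := by
    have := dFP_ge_zero (Γ 0) (fun t : unitInterval => (t : ℝ))
    rw [h0] at this
    have h' : edist (Γ 0 0) ((0:unitInterval):ℝ) = 0 :=
      le_antisymm (by simpa using this) zero_le
    simpa using edist_eq_zero.1 h'
  have hΓ01 : Γ 0 1 = 1 := by
    have := dFP_ge_one (Γ 0) (fun t : unitInterval => (t : ℝ))
    rw [h0] at this
    have h' : edist (Γ 0 1) ((1:unitInterval):ℝ) = 0 :=
      le_antisymm (by simpa using this) zero_le
    simpa using edist_eq_zero.1 h'
  have hΓ10 : Γ 1 0 = 1 := by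
    have := dFP_ge_zero (Γ 1) (fun t : unitInterval => 1 - (t : ℝ))
    rw [h1] at this
    have h' : edist (Γ 1 0) (1 - ((0:unitInterval):ℝ)) = 0 :=
      le_antisymm (by simpa using this) zero_le
    have := edist_eq_zero.1 h'
    simpa using this
  have hΓ11 : Γ 1 1 = 0 := by
    have := dFP_ge_one (Γ 1) (fun t : unitInterval => 1 - (t : ℝ))
    rw [h1] at this
    have h' : edist (Γ 1 1) (1 - ((1:unitInterval):ℝ)) = 0 :=
      le_antisymm (by simpa using this) zero_le
    have := edist_eq_zero.1 h'
    simpa using this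
  -- the endpoint-difference function
  set f : unitInterval → ℝ := fun t => Γ t 1 - Γ t 0 with hf
  have hfc : Continuous f := by
    rw [Metric.continuous_iff]
    intro t ε hε
    obtain ⟨δ, hδ, hδ'⟩ := hcont t (ε/2) (by linarith)
    refine ⟨δ, hδ, fun s hs => ?_⟩
    have hst : |(s:ℝ) - (t:ℝ)| < δ := by
      rwa [Subtype.dist_eq, Real.dist_eq] at hs
    have hd := hδ' s hst
    have h0' : edist (Γ s 0) (Γ t 0) < ENNReal.ofReal (ε/2) :=
      lt_of_le_of_lt (dFP_ge_zero (Γ s) (Γ t)) hd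
    have h1' : edist (Γ s 1) (Γ t 1) < ENNReal.ofReal (ε/2) :=
      lt_of_le_of_lt (dFP_ge_one (Γ s) (Γ t)) hd
    have d0 : dist (Γ s 0) (Γ t 0) < ε/2 := by
      rwa [edist_lt_ofReal] at h0'
    have d1 : dist (Γ s 1) (Γ t 1) < ε/2 := by
      rwa [edist_lt_ofReal] at h1'
    rw [Real.dist_eq] at d0 d1 ⊢
    have a0 := abs_lt.1 d0
    have a1 := abs_lt.1 d1
    have hre : f s - f t = (Γ s 1 - Γ t 1) - (Γ s 0 - Γ t 0) := by
      simp only [hf]; ring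
    rw [hre, abs_lt]
    constructor <;> linarith [a0.1, a0.2, a1.1, a1.2]
  have hf0 : f 0 = 1 := by rw [hf]; simp [hΓ00, hΓ01]
  have hf1 : f 1 = -1 := by rw [hf]; simp [hΓ10, hΓ11]
  have hmem : (0:ℝ) ∈ Set.Icc (f 1) (f 0) := by rw [hf0, hf1]; norm_num
  obtain ⟨t₀, ht₀⟩ := intermediate_value_univ 1 0 hfc hmem
  have heq : Γ t₀ 0 = Γ t₀ 1 := by
    have : Γ t₀ 1 - Γ t₀ 0 = 0 := ht₀
    linarith
  exact endpoints_ne (hΓ t₀).1 (hΓ t₀).2 heq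
end
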